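/- arXiv:1811.07257 — 4 statements merged into one kernel-verified Lean document; each statement's English description precedes it below -/
import Mathlib

section
/- Fix 0 ≠ k ∈ ℝ³ and suppose u₊, u₋ ∈ k⊥ satisfy C_k u₊ = |k| u₊ and C_k u₋ = −|k| u₋; let u = u₊ + u₋. Then exp(t(C_k − |k|·id)) u → u₊ and exp(t(−C_k − |k|·id)) u → u₋ as t → ∞, where exp denotes the exponential of endomorphisms of ℂ³. (This is the Fourier-mode form of the statement that the flows of the helicity vector fields h_± converge to the orthogonal projections onto the positive and negative helicity subspaces of electromagnetic configuration space.) -/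
/-- The operator `C_k u = i k × u` on `ℂ³`, where `×` is the complex-bilinear
cross product and `k ∈ ℝ³`. -/
noncomputable def Ck (k : Fin 3 → ℝ) (u : Fin 3 → ℂ) : Fin 3 → ℂ :=
  Complex.I • (crossProduct (fun j => (k j : ℂ)) u)

/-- The Euclidean length `|k|` of `k ∈ ℝ³`. -/
noncomputable def nk (k : Fin 3 → ℝ) : ℝ := Real.sqrt (∑ j, k j ^ 2)

/-- `C_k` as a continuous linear endomorphism of `ℂ³`. -/
noncomputable def CkL (k : Fin 3 → ℝ) : (Fin 3 → ℂ) →L[ℂ] (Fin 3 → ℂ) :=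
  LinearMap.toContinuousLinearMap
    (Complex.I • crossProduct (fun j => (k j : ℂ)))

lemma exp_apply_eigen (A : (Fin 3 → ℂ) →L[ℂ] (Fin 3 → ℂ)) (μ : ℂ) (v : Fin 3 → ℂ)
    (h : A v = μ • v) :
    NormedSpace.exp A v = Complex.exp μ • v := by
  have hpow : ∀ n : ℕ, (A ^ n) v = μ ^ n • v := by
    intro n
    induction n with
    | zero => simp
    | succ n ih =>
      rw [pow_succ, pow_succ, ContinuousLinearMap.mul_apply, h, map_smul, ih,
        smul_smul, mul_comm]
  have hs : Summable (fun n : ℕ => ((n.factorial : ℂ)⁻¹) • A ^ n) :=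
    NormedSpace.expSeries_summable' A
  have hs2 : Summable (fun n : ℕ => ((n.factorial : ℂ)⁻¹) • μ ^ n) :=
    NormedSpace.expSeries_summable' μ
  calc NormedSpace.exp A v
      = (∑' n : ℕ, ((n.factorial : ℂ)⁻¹) • A ^ n) v := by
        rw [NormedSpace.exp_eq_tsum ℂ]
    _ = ∑' n : ℕ, (((n.factorial : ℂ)⁻¹) • A ^ n) v := by
        exact (ContinuousLinearMap.apply ℂ (Fin 3 → ℂ) v).map_tsum hs
    _ = ∑' n : ℕ, (((n.factorial : ℂ)⁻¹) • μ ^ n) • v := by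
        refine tsum_congr fun n => ?_
        rw [ContinuousLinearMap.smul_apply, hpow, smul_smul, smul_eq_mul]
    _ = (∑' n : ℕ, ((n.factorial : ℂ)⁻¹) • μ ^ n) • v := by
        exact hs2.tsum_smul_const v
    _ = Complex.exp μ • v := by
        rw [Complex.exp_eq_exp_ℂ, NormedSpace.exp_eq_tsum ℂ]

/-- Fix `0 ≠ k ∈ ℝ³`, `u₊, u₋ ∈ k⊥` with `C_k u₊ = |k| u₊` and
`C_k u₋ = −|k| u₋`, and set `u = u₊ + u₋`.  Then
`exp(t(C_k − |k|·id)) u → u₊` and `exp(t(−C_k − |k|·id)) u → u₋` as `t → ∞`,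
where `exp` is the exponential of (continuous linear) endomorphisms of `ℂ³`. -/
theorem helicityFlows_tendsto_projections (k : Fin 3 → ℝ) (hk : k ≠ 0)
    (up um : Fin 3 → ℂ)
    (hup_perp : ∑ j, up j * (k j : ℂ) = 0)
    (hum_perp : ∑ j, um j * (k j : ℂ) = 0)
    (hup : Ck k up = (nk k : ℂ) • up)
    (hum : Ck k um = (-(nk k : ℂ)) • um) :
    Filter.Tendsto
      (fun t : ℝ =>
        NormedSpace.exp
          (t • (CkL k - (nk k : ℂ) • ContinuousLinearMap.id ℂ (Fin 3 → ℂ)))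
          (up + um))
      Filter.atTop (nhds up) ∧
    Filter.Tendsto
      (fun t : ℝ =>
        NormedSpace.exp
          (t • (-(CkL k) - (nk k : ℂ) • ContinuousLinearMap.id ℂ (Fin 3 → ℂ)))
          (up + um))
      Filter.atTop (nhds um) := by
  set c : ℝ := nk k with hc
  have hcpos : 0 < c := by
    obtain ⟨j, hj⟩ := Function.ne_iff.mp hk
    exact Real.sqrt_pos.mpr (Finset.sum_pos' (fun i _ => sq_nonneg _)
      ⟨j, Finset.mem_univ j, by exact pow_pos (abs_pos.mpr hj) 2 |>.trans_eq (sq_abs _)⟩)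
  have hCkLup : CkL k up = (c : ℂ) • up := hup
  have hCkLum : CkL k um = (-(c : ℂ)) • um := hum
  -- limit lemma
  have hlim : Filter.Tendsto (fun t : ℝ => Complex.exp ((t : ℂ) * (-(2 * c))))
      Filter.atTop (nhds 0) := by
    have h0 : Filter.Tendsto (fun t : ℝ => t * (-(2 * c))) Filter.atTop Filter.atBot :=
      Filter.Tendsto.atTop_mul_const_of_neg (by linarith) Filter.tendsto_id
    have h1 : Filter.Tendsto (fun t : ℝ => Real.exp (t * (-(2 * c))))
        Filter.atTop (nhds 0) := Real.tendsto_exp_atBot.comp h0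
    rw [tendsto_zero_iff_norm_tendsto_zero]
    refine h1.congr fun t => ?_
    have h3 : ((t : ℂ) * (-(2 * (c : ℂ)))) = ((t * (-(2 * c)) : ℝ) : ℂ) := by
      push_cast; ring
    rw [show Complex.exp ((t : ℂ) * (-(2 * (c : ℂ)))) = ((Real.exp (t * (-(2 * c))) : ℝ) : ℂ)
      by rw [h3, Complex.ofReal_exp], Complex.norm_real, Real.norm_eq_abs, Real.abs_exp]
  constructor
  · -- positive helicity flow
    have key : ∀ t : ℝ,
        NormedSpace.exp
          (t • (CkL k - (c : ℂ) • ContinuousLinearMap.id ℂ (Fin 3 → ℂ)))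
          (up + um) = up + Complex.exp ((t : ℂ) * (-(2 * c))) • um := by
      intro t
      set B := t • (CkL k - (c : ℂ) • ContinuousLinearMap.id ℂ (Fin 3 → ℂ)) with hB
      have hBup : B up = (0 : ℂ) • up := by
        simp [hB, hCkLup]
      have hBum : B um = ((t : ℂ) * (-(2 * c))) • um := by
        simp only [hB, ContinuousLinearMap.smul_apply, ContinuousLinearMap.sub_apply,
          ContinuousLinearMap.id_apply, ContinuousLinearMap.smul_apply, hCkLum]
        rw [← sub_smul, ← smul_assoc]
        congr 1
        rw [Complex.real_smul]
        push_cast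
        ring
      rw [map_add, exp_apply_eigen _ _ _ hBup, exp_apply_eigen _ _ _ hBum,
        Complex.exp_zero, one_smul]
    simp only [key]
    have := Filter.Tendsto.add (tendsto_const_nhds : Filter.Tendsto (fun _ : ℝ => up) Filter.atTop (nhds up))
      (hlim.smul_const um)
    simpa using this
  · -- negative helicity flow
    have key : ∀ t : ℝ,
        NormedSpace.exp
          (t • (-(CkL k) - (c : ℂ) • ContinuousLinearMap.id ℂ (Fin 3 → ℂ)))
          (up + um) = Complex.exp ((t : ℂ) * (-(2 * c))) • up + um := by
      intro t
      set B := t • (-(CkL k) - (c : ℂ) • ContinuousLinearMap.id ℂ (Fin 3 → ℂ)) with hB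
      have hBum : B um = (0 : ℂ) • um := by
        simp [hB, hCkLum]
      have hBup : B up = ((t : ℂ) * (-(2 * c))) • up := by
        simp only [hB, ContinuousLinearMap.smul_apply, ContinuousLinearMap.sub_apply,
          ContinuousLinearMap.neg_apply, ContinuousLinearMap.id_apply,
          ContinuousLinearMap.smul_apply, hCkLup]
        rw [← neg_smul, ← sub_smul, ← smul_assoc]
        congr 1
        rw [Complex.real_smul]
        push_cast
        ring
      rw [map_add, exp_apply_eigen _ _ _ hBup, exp_apply_eigen _ _ _ hBum,
        Complex.exp_zero, one_smul]
    simp only [key]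
    have := Filter.Tendsto.add (hlim.smul_const up)
      (tendsto_const_nhds : Filter.Tendsto (fun _ : ℝ => um) Filter.atTop (nhds um))
    simpa using this
end

section
/- Let 𝔞 : ℝ³ × [0,∞) → M_n(ℂ)³ be a smooth time-dependent gauge potential satisfying the Yang–Mills–Poisson equation, and let g : ℝ³ → GL_n(ℂ) be smooth (independent of s). Then the gauge transform 𝔞^g, defined by (𝔞^g)_j(x,s) = g(x)⁻¹ 𝔞_j(x,s) g(x) + g(x)⁻¹ ∂_j g(x), also satisfies the Yang–Mills–Poisson equation. -/
/-- Entrywise partial derivative `∂_j f` of a matrix-valued function on `ℝ³`. -/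
noncomputable def pdM {n : ℕ}
    (j : Fin 3) (f : (Fin 3 → ℝ) → Matrix (Fin n) (Fin n) ℂ) (x : Fin 3 → ℝ) :
    Matrix (Fin n) (Fin n) ℂ :=
  Matrix.of fun i l => fderiv ℝ (fun y => f y i l) x (Pi.single j 1)

/-- Entrywise derivative in `s` of a matrix-valued function of a real variable. -/
noncomputable def dsM {n : ℕ} (f : ℝ → Matrix (Fin n) (Fin n) ℂ) (s : ℝ) :
    Matrix (Fin n) (Fin n) ℂ :=
  Matrix.of fun i l => deriv (fun τ => f τ i l) s

/-- Spatial curvature `𝔟_{jk}(x,s) = ∂_j 𝔞_k − ∂_k 𝔞_j + [𝔞_j, 𝔞_k]` of a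
time-dependent matrix-valued gauge potential, `[X,Y] = XY − YX`. -/
noncomputable def curvMt {n : ℕ}
    (𝔞 : Fin 3 → (Fin 3 → ℝ) → ℝ → Matrix (Fin n) (Fin n) ℂ) (j k : Fin 3)
    (x : Fin 3 → ℝ) (s : ℝ) : Matrix (Fin n) (Fin n) ℂ :=
  pdM j (fun y => 𝔞 k y s) x - pdM k (fun y => 𝔞 j y s) x
    + (𝔞 j x s * 𝔞 k x s - 𝔞 k x s * 𝔞 j x s)

/-- The Yang–Mills–Poisson equation in temporal gauge:
`∂_s² 𝔞_j = −∑_k ∂_k^𝔞 𝔟_{kj}` where `∂_k^𝔞 ξ = ∂_k ξ + [𝔞_k, ξ]`. -/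
def YangMillsPoissonM {n : ℕ}
    (𝔞 : Fin 3 → (Fin 3 → ℝ) → ℝ → Matrix (Fin n) (Fin n) ℂ) : Prop :=
  ∀ j x (s : ℝ), 0 ≤ s →
    dsM (fun τ => dsM (fun σ => 𝔞 j x σ) τ) s =
      -∑ k, (pdM k (fun y => curvMt 𝔞 k j y s) x
        + (𝔞 k x s * curvMt 𝔞 k j x s - curvMt 𝔞 k j x s * 𝔞 k x s))

open Matrix

/-- entrywise smooth matrix-valued function on ℝ³. -/
def Sm {n : ℕ} (f : (Fin 3 → ℝ) → Matrix (Fin n) (Fin n) ℂ) : Prop :=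
  ∀ i l, ContDiff ℝ (⊤ : ℕ∞) fun x => f x i l

namespace Sm

variable {n : ℕ} {f h : (Fin 3 → ℝ) → Matrix (Fin n) (Fin n) ℂ}

theorem add (hf : Sm f) (hh : Sm h) : Sm (fun x => f x + h x) := fun i l => by
  simpa [Matrix.add_apply] using (hf i l).add (hh i l)

theorem sub (hf : Sm f) (hh : Sm h) : Sm (fun x => f x - h x) := fun i l => by
  simpa [Matrix.sub_apply] using (hf i l).sub (hh i l)

theorem mul (hf : Sm f) (hh : Sm h) : Sm (fun x => f x * h x) := fun i l => by
  simp only [Matrix.mul_apply]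
  exact ContDiff.sum fun m _ => (hf i m).mul (hh m l)

theorem diffAt (hf : Sm f) (i l : Fin n) (x : Fin 3 → ℝ) :
    DifferentiableAt ℝ (fun y => f y i l) x :=
  ((hf i l).differentiable (by simp)).differentiableAt

theorem pdM (hf : Sm f) (j : Fin 3) : Sm (fun x => pdM j f x) := fun i l => by
  simp only [_root_.pdM, Matrix.of_apply]
  exact ((hf i l).fderiv_right (m := (⊤:ℕ∞)) (by exact_mod_cast le_top)).clm_apply contDiff_const

end Sm

section pdMRules

variable {n : ℕ} {f h : (Fin 3 → ℝ) → Matrix (Fin n) (Fin n) ℂ} {j k : Fin 3} {x : Fin 3 → ℝ}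

theorem pdM_add (hf : Sm f) (hh : Sm h) :
    pdM j (fun x => f x + h x) x = pdM j f x + pdM j h x := by
  ext i l
  simp only [pdM, Matrix.of_apply, Matrix.add_apply]
  rw [fderiv_fun_add (hf.diffAt i l x) (hh.diffAt i l x)]
  rfl

theorem pdM_one : pdM j (fun _ : Fin 3 → ℝ => (1 : Matrix (Fin n) (Fin n) ℂ)) x = 0 := by
  ext i l
  simp [pdM, fderiv_const]

theorem pdM_mul (hf : Sm f) (hh : Sm h) :
    pdM j (fun x => f x * h x) x = pdM j f x * h x + f x * pdM j h x := by
  ext i l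
  simp only [pdM, Matrix.of_apply, Matrix.add_apply, Matrix.mul_apply]
  rw [fderiv_fun_sum (fun m _ => ((hf.diffAt i m x).fun_mul (hh.diffAt m l x)))]
  simp only [ContinuousLinearMap.coe_sum', Finset.sum_apply]
  rw [← Finset.sum_add_distrib]
  congr 1
  funext m
  rw [fderiv_fun_mul (hf.diffAt i m x) (hh.diffAt m l x)]
  simp [mul_comm]
  ring

end pdMRules

section Symm

variable {n : ℕ} {f : (Fin 3 → ℝ) → Matrix (Fin n) (Fin n) ℂ} {j k : Fin 3} {x : Fin 3 → ℝ}

theorem pdM_comm (hf : Sm f) :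
    pdM j (fun y => pdM k f y) x = pdM k (fun y => pdM j f y) x := by
  ext i l
  simp only [pdM, Matrix.of_apply]
  have hd : ∀ y, DifferentiableAt ℝ (fun z => f z i l) y := fun y => hf.diffAt i l y
  have hC : ContDiff ℝ (⊤:ℕ∞) fun y => fderiv ℝ (fun z => f z i l) y :=
    (hf i l).fderiv_right (m := (⊤:ℕ∞)) (by exact_mod_cast le_top)
  have h1 : ∀ (v : Fin 3 → ℝ),
      fderiv ℝ (fun y => fderiv ℝ (fun z => f z i l) y v) x =
        (fderiv ℝ (fderiv ℝ (fun z => f z i l)) x).flip v := by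
    intro v
    have := fderiv_clm_apply (x := x) (c := fun y => fderiv ℝ (fun z => f z i l) y)
      (u := fun _ => v) ((hC.differentiable (by simp)).differentiableAt)
      (differentiableAt_const v)
    simpa [fderiv_const] using this
  rw [h1, h1]
  simp only [ContinuousLinearMap.flip_apply]
  exact (((hf i l).contDiffAt).isSymmSndFDerivAt (by rw [minSmoothness_of_isRCLikeNormedField]; exact WithTop.coe_le_coe.mpr (le_top : (2:ℕ∞) ≤ ⊤))).eq _ _

end Symm

section Inv

variable {n : ℕ} {g : (Fin 3 → ℝ) → Matrix (Fin n) (Fin n) ℂ} {j : Fin 3}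

theorem Sm.det (hf : Sm g) : ContDiff ℝ (⊤ : ℕ∞) fun x => (g x).det := by
  have : (fun x => (g x).det) =
      fun x => ∑ σ : Equiv.Perm (Fin n), (Equiv.Perm.sign σ : ℂ) * ∏ i, g x (σ i) i := by
    funext x; rw [Matrix.det_apply']
  rw [this]
  exact ContDiff.sum fun σ _ =>
    contDiff_const.mul (contDiff_prod fun i _ => hf (σ i) i)

theorem Sm.inv (hf : Sm g) (hgunit : ∀ x, IsUnit (g x)) :
    Sm (fun x => (g x)⁻¹) := by
  intro i l
  have hdetne : ∀ x, (g x).det ≠ 0 := fun x =>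
    ((Matrix.isUnit_iff_isUnit_det (g x)).mp (hgunit x)).ne_zero
  have : (fun x => (g x)⁻¹ i l) =
      fun x => ((g x).det)⁻¹ * ((g x).updateRow l (Pi.single i 1)).det := by
    funext x
    rw [Matrix.inv_def, Matrix.smul_apply, Ring.inverse_eq_inv', Matrix.adjugate_apply,
      smul_eq_mul]
  rw [this]
  refine (hf.det.inv hdetne).mul (Sm.det ?_)
  intro a b
  have : (fun x => (g x).updateRow l (Pi.single i 1) a b) =
      fun x => if a = l then (Pi.single i 1 : Fin n → ℂ) b else g x a b := by
    funext x; rw [Matrix.updateRow_apply]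
  rw [this]
  by_cases h : a = l
  · simp only [h, if_true]; exact contDiff_const
  · simpa [h] using hf a b

theorem pdM_inv (hf : Sm g) (hgunit : ∀ x, IsUnit (g x)) (x : Fin 3 → ℝ) :
    pdM j (fun x => (g x)⁻¹) x = -((g x)⁻¹ * pdM j g x * (g x)⁻¹) := by
  have hdet : ∀ y, IsUnit (g y).det := fun y => (Matrix.isUnit_iff_isUnit_det (g y)).mp (hgunit y)
  have h1 : (fun y => (g y)⁻¹ * g y) = fun _ => (1 : Matrix (Fin n) (Fin n) ℂ) := by
    funext y; exact Matrix.nonsing_inv_mul (g y) (hdet y)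
  have h2 := pdM_mul (j := j) (x := x) (hf.inv hgunit) hf
  rw [h1, pdM_one] at h2
  have h3 : pdM j (fun x => (g x)⁻¹) x * g x = -((g x)⁻¹ * pdM j g x) := by
    exact eq_neg_of_add_eq_zero_left h2.symm
  calc pdM j (fun x => (g x)⁻¹) x
      = pdM j (fun x => (g x)⁻¹) x * (g x * (g x)⁻¹) := by
        rw [Matrix.mul_nonsing_inv (g x) (hdet x), mul_one]
    _ = (pdM j (fun x => (g x)⁻¹) x * g x) * (g x)⁻¹ := by rw [mul_assoc]
    _ = -((g x)⁻¹ * pdM j g x * (g x)⁻¹) := by rw [h3]; noncomm_ring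

end Inv

section dsMRules

variable {n : ℕ} {f : ℝ → Matrix (Fin n) (Fin n) ℂ} {s : ℝ}
  {C D E : Matrix (Fin n) (Fin n) ℂ}

theorem dsM_add_const (E : Matrix (Fin n) (Fin n) ℂ) :
    dsM (fun τ => f τ + E) s = dsM f s := by
  ext i l
  simp only [dsM, Matrix.of_apply, Matrix.add_apply]
  exact deriv_add_const (E i l)

theorem dsM_conj (hf : ∀ i l, DifferentiableAt ℝ (fun τ => f τ i l) s) :
    dsM (fun τ => C * f τ * D) s = C * dsM f s * D := by
  ext i l
  simp only [dsM, Matrix.of_apply]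
  have h1 : (fun τ => (C * f τ * D) i l) =
      fun τ => ∑ m' : Fin n, ∑ m : Fin n, C i m * f τ m m' * D m' l := by
    funext τ; simp [Matrix.mul_apply, Finset.sum_mul]
  rw [h1, deriv_fun_sum (fun m' _ => DifferentiableAt.fun_sum fun m _ =>
    ((hf m m').const_mul _).mul_const _)]
  have h2 : ∀ m', deriv (fun τ => ∑ m : Fin n, C i m * f τ m m' * D m' l) s
      = ∑ m : Fin n, C i m * deriv (fun τ => f τ m m') s * D m' l := by
    intro m'
    rw [deriv_fun_sum (fun m _ => ((hf m m').const_mul _).mul_const _)]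
    congr 1; funext m
    rw [show (fun τ => C i m * f τ m m' * D m' l)
        = fun τ => C i m * (f τ m m' * D m' l) from by funext τ; ring]
    rw [deriv_const_mul _ ((hf m m').mul_const _), deriv_mul_const (hf m m')]
    ring
  simp only [h2]
  simp [Matrix.mul_apply, Finset.sum_mul, mul_assoc]

end dsMRules

section RingKey

variable {R : Type*} [Ring R]

theorem mulkey {U G : R} (hGU : G * U = 1) :
    ∀ X Y : R, (U * (X * G)) * (U * Y) = U * (X * Y) := by
  intro X Y
  rw [mul_assoc U (X*G) (U*Y), mul_assoc X G (U*Y), ← mul_assoc G U Y, hGU, one_mul]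

theorem ring_key (U G Aj Ak Pj Pk Q Sjk Skj : R) (hGU : G * U = 1) :
    (((-(U*Pj*U)*Ak + U*Sjk)*G + (U*Ak)*Pj) + (-(U*Pj*U)*Pk + U*Q))
    - ((((-(U*Pk*U))*Aj + U*Skj)*G + (U*Aj)*Pk) + ((-(U*Pk*U))*Pj + U*Q))
    + ((U*Aj*G + U*Pj) * (U*Ak*G + U*Pk) - (U*Ak*G + U*Pk) * (U*Aj*G + U*Pj))
    = U * ((Sjk - Skj) + (Aj*Ak - Ak*Aj)) * G := by
  rw [mul_assoc U Aj G, mul_assoc U Ak G]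
  simp only [mul_add, add_mul, mulkey hGU]
  noncomm_ring

theorem ring_div (U G Ak Pk B T : R) (hGU : G * U = 1) :
    ((-(U*Pk*U)*B + U*T)*G + (U*B)*Pk)
    + ((U*Ak*G + U*Pk) * (U*B*G) - (U*B*G) * (U*Ak*G + U*Pk))
    = U * (T + (Ak*B - B*Ak)) * G := by
  rw [mul_assoc U Ak G, mul_assoc U B G]
  simp only [mul_add, add_mul, mulkey hGU]
  noncomm_ring

end RingKey

section Main

variable {n : ℕ}
  {𝔞 : Fin 3 → (Fin 3 → ℝ) → ℝ → Matrix (Fin n) (Fin n) ℂ}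
  {g : (Fin 3 → ℝ) → Matrix (Fin n) (Fin n) ℂ}
  {𝔞g : Fin 3 → (Fin 3 → ℝ) → ℝ → Matrix (Fin n) (Fin n) ℂ}

theorem curv_transform
    (h𝔞 : ∀ j i l, ContDiff ℝ (⊤ : ℕ∞) fun p : (Fin 3 → ℝ) × ℝ => 𝔞 j p.1 p.2 i l)
    (hg : ∀ i l, ContDiff ℝ (⊤ : ℕ∞) fun x => g x i l)
    (hgunit : ∀ x, IsUnit (g x))
    (h𝔞g : ∀ j x s, 𝔞g j x s = (g x)⁻¹ * 𝔞 j x s * g x + (g x)⁻¹ * pdM j g x)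
    (j k : Fin 3) (x : Fin 3 → ℝ) (s : ℝ) :
    curvMt 𝔞g j k x s = (g x)⁻¹ * curvMt 𝔞 j k x s * g x := by
  have hgS : Sm g := hg
  have SmU : Sm (fun y => (g y)⁻¹) := hgS.inv hgunit
  have SmA : ∀ m : Fin 3, Sm (fun y => 𝔞 m y s) := fun m i l =>
    (h𝔞 m i l).comp (contDiff_id.prodMk contDiff_const)
  have SmP : ∀ m : Fin 3, Sm (fun y => pdM m g y) := fun m => hgS.pdM m
  have SmUA : ∀ m : Fin 3, Sm (fun y => (g y)⁻¹ * 𝔞 m y s) := fun m => SmU.mul (SmA m)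
  have hGU : g x * (g x)⁻¹ = 1 :=
    Matrix.mul_nonsing_inv _ ((Matrix.isUnit_iff_isUnit_det _).mp (hgunit x))
  have e : ∀ m : Fin 3, (fun y => 𝔞g m y s)
      = fun y => (g y)⁻¹ * 𝔞 m y s * g y + (g y)⁻¹ * pdM m g y :=
    fun m => funext fun y => h𝔞g m y s
  simp only [curvMt]
  rw [e j, e k, h𝔞g j x s, h𝔞g k x s]
  rw [pdM_add ((SmUA k).mul hgS) (SmU.mul (SmP k)),
    pdM_add ((SmUA j).mul hgS) (SmU.mul (SmP j)),
    pdM_mul (SmUA k) hgS, pdM_mul (SmUA j) hgS,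
    pdM_mul SmU (SmA k), pdM_mul SmU (SmA j),
    pdM_mul SmU (SmP k), pdM_mul SmU (SmP j),
    pdM_inv (j := j) hgS hgunit x, pdM_inv (j := k) hgS hgunit x,
    pdM_comm (j := k) (k := j) hgS]
  exact ring_key ((g x)⁻¹) (g x) (𝔞 j x s) (𝔞 k x s) (pdM j g x) (pdM k g x)
    (pdM j (fun y => pdM k g y) x)
    (pdM j (fun y => 𝔞 k y s) x) (pdM k (fun y => 𝔞 j y s) x) hGU

end Main

/-- If a smooth time-dependent gauge potential `𝔞` satisfies the
Yang–Mills–Poisson equation and `g : ℝ³ → GL_n(ℂ)` is smooth and independent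
of `s`, then the gauge transform `(𝔞^g)_j = g⁻¹ 𝔞_j g + g⁻¹ ∂_j g` also
satisfies the Yang–Mills–Poisson equation. -/
theorem gaugeTransform_preserves_YangMillsPoisson {n : ℕ}
    (𝔞 : Fin 3 → (Fin 3 → ℝ) → ℝ → Matrix (Fin n) (Fin n) ℂ)
    (h𝔞 : ∀ j i l, ContDiff ℝ (⊤ : ℕ∞) fun p : (Fin 3 → ℝ) × ℝ => 𝔞 j p.1 p.2 i l)
    (hYMP : YangMillsPoissonM 𝔞)
    (g : (Fin 3 → ℝ) → Matrix (Fin n) (Fin n) ℂ)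
    (hg : ∀ i l, ContDiff ℝ (⊤ : ℕ∞) fun x => g x i l)
    (hgunit : ∀ x, IsUnit (g x))
    (𝔞g : Fin 3 → (Fin 3 → ℝ) → ℝ → Matrix (Fin n) (Fin n) ℂ)
    (h𝔞g : ∀ j x s, 𝔞g j x s = (g x)⁻¹ * 𝔞 j x s * g x + (g x)⁻¹ * pdM j g x) :
    YangMillsPoissonM 𝔞g := by
  intro j x s hs
  have hgS : Sm g := hg
  have SmU : Sm (fun y => (g y)⁻¹) := hgS.inv hgunit
  have SmA : ∀ m : Fin 3, Sm (fun y => 𝔞 m y s) := fun m i l =>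
    (h𝔞 m i l).comp (contDiff_id.prodMk contDiff_const)
  have hGU : g x * (g x)⁻¹ = 1 :=
    Matrix.mul_nonsing_inv _ ((Matrix.isUnit_iff_isUnit_det _).mp (hgunit x))
  -- time-smoothness of entries of s ↦ 𝔞 j x s
  have hAt : ∀ i l, ContDiff ℝ (⊤ : ℕ∞) fun σ => 𝔞 j x σ i l := fun i l =>
    (h𝔞 j i l).comp (contDiff_const.prodMk contDiff_id)
  -- LHS transformation
  have inner : (fun σ => 𝔞g j x σ)
      = fun σ => (g x)⁻¹ * 𝔞 j x σ * g x + (g x)⁻¹ * pdM j g x :=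
    funext fun σ => h𝔞g j x σ
  have inner2 : ∀ τ, dsM (fun σ => 𝔞g j x σ) τ
      = (g x)⁻¹ * dsM (fun σ => 𝔞 j x σ) τ * g x := by
    intro τ
    rw [inner, dsM_add_const ((g x)⁻¹ * pdM j g x)]
    exact dsM_conj fun i l => ((hAt i l).differentiable (by simp)).differentiableAt
  rw [funext inner2]
  have hds : ∀ i l, DifferentiableAt ℝ
      (fun τ => dsM (fun σ => 𝔞 j x σ) τ i l) s := by
    intro i l
    have h5 : ContDiff ℝ (⊤ : ℕ∞) (deriv fun σ => 𝔞 j x σ i l) := by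
      have := (contDiff_infty_iff_deriv.mp (by exact_mod_cast hAt i l)).2
      exact_mod_cast this
    exact ((h5.differentiable (by simp)).differentiableAt)
  rw [dsM_conj hds, hYMP j x s hs]
  -- RHS transformation
  have hk : ∀ k : Fin 3,
      pdM k (fun y => curvMt 𝔞g k j y s) x
        + (𝔞g k x s * curvMt 𝔞g k j x s - curvMt 𝔞g k j x s * 𝔞g k x s)
      = (g x)⁻¹ * (pdM k (fun y => curvMt 𝔞 k j y s) x
        + (𝔞 k x s * curvMt 𝔞 k j x s - curvMt 𝔞 k j x s * 𝔞 k x s)) * g x := by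
    intro k
    have SmB : Sm (fun y => curvMt 𝔞 k j y s) :=
      (((SmA j).pdM k).sub ((SmA k).pdM j)).add
        (((SmA k).mul (SmA j)).sub ((SmA j).mul (SmA k)))
    have ec : (fun y => curvMt 𝔞g k j y s)
        = fun y => (g y)⁻¹ * curvMt 𝔞 k j y s * g y :=
      funext fun y => curv_transform h𝔞 hg hgunit h𝔞g k j y s
    rw [ec, curv_transform h𝔞 hg hgunit h𝔞g k j x s, h𝔞g k x s,
      pdM_mul (SmU.mul SmB) hgS, pdM_mul SmU SmB, pdM_inv (j := k) hgS hgunit x]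
    exact ring_div ((g x)⁻¹) (g x) (𝔞 k x s) (pdM k g x) (curvMt 𝔞 k j x s)
      (pdM k (fun y => curvMt 𝔞 k j y s) x) hGU
  rw [mul_neg, neg_mul, Finset.mul_sum, Finset.sum_mul]
  exact neg_inj.mpr (Finset.sum_congr rfl fun k _ => (hk k).symm)
end

section
/- Let 𝔨 be a finite-dimensional real Lie algebra with an invariant inner product, and let 𝔞 be a smooth solution of the Yang–Mills–Poisson equation such that for some R > 0, 𝔞(x,s) = 0 whenever |x| ≥ R (for every s ≥ 0). Then the function s ↦ ‖∂_s 𝔞(·,s)‖²_{L²} − ‖𝔟(·,s)‖²_{L²} is constant on [0,∞). -/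
open MeasureTheory

/-- Partial derivative `∂_j f` of a function on `ℝ³` with values in a normed
real vector space. -/
noncomputable def pd3 {𝕜 : Type*} [NormedAddCommGroup 𝕜] [NormedSpace ℝ 𝕜]
    (j : Fin 3) (f : (Fin 3 → ℝ) → 𝕜) (x : Fin 3 → ℝ) : 𝕜 :=
  fderiv ℝ f x (Pi.single j 1)

/-- Spatial curvature `𝔟_{jk}(x,s) = ∂_j 𝔞_k − ∂_k 𝔞_j + [𝔞_j, 𝔞_k]` of a
time-dependent `𝔨`-valued gauge potential, with bracket `β`. -/
noncomputable def curvK {𝔨 : Type*} [NormedAddCommGroup 𝔨] [NormedSpace ℝ 𝔨]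
    (β : 𝔨 →ₗ[ℝ] 𝔨 →ₗ[ℝ] 𝔨) (𝔞 : Fin 3 → (Fin 3 → ℝ) → ℝ → 𝔨) (j k : Fin 3)
    (x : Fin 3 → ℝ) (s : ℝ) : 𝔨 :=
  pd3 j (fun y => 𝔞 k y s) x - pd3 k (fun y => 𝔞 j y s) x
    + β (𝔞 j x s) (𝔞 k x s)

/-- The Yang–Mills–Poisson equation in temporal gauge:
`∂_s² 𝔞_j = −∑_k ∂_k^𝔞 𝔟_{kj}` where `∂_k^𝔞 ξ = ∂_k ξ + [𝔞_k, ξ]`. -/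
def YangMillsPoissonK {𝔨 : Type*} [NormedAddCommGroup 𝔨] [NormedSpace ℝ 𝔨]
    (β : 𝔨 →ₗ[ℝ] 𝔨 →ₗ[ℝ] 𝔨) (𝔞 : Fin 3 → (Fin 3 → ℝ) → ℝ → 𝔨) : Prop :=
  ∀ j x (s : ℝ), 0 ≤ s →
    deriv (fun τ => deriv (fun σ => 𝔞 j x σ) τ) s =
      -∑ k, (pd3 k (fun y => curvK β 𝔞 k j y s) x
        + β (𝔞 k x s) (curvK β 𝔞 k j x s))

set_option linter.unusedSectionVars false
namespace YMPaux
open Metric Set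
abbrev X3 := Fin 3 → ℝ
abbrev P3 := (Fin 3 → ℝ) × ℝ
variable {𝔨 : Type*} [NormedAddCommGroup 𝔨] [NormedSpace ℝ 𝔨]
lemma hasDerivAt_slice {f : P3 → 𝔨} (hf : ContDiff ℝ (⊤ : ℕ∞) f) (x : X3) (s : ℝ) :
    HasDerivAt (fun σ => f (x, σ)) (fderiv ℝ f (x, s) (0, 1)) s :=
  ((hf.differentiable (by simp) (x, s)).hasFDerivAt).comp_hasDerivAt s
    ((hasDerivAt_const s x).prodMk (hasDerivAt_id s))

lemma hasFDerivAt_slice {f : P3 → 𝔨} (hf : ContDiff ℝ (⊤ : ℕ∞) f) (x : X3) (s : ℝ) :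
    HasFDerivAt (fun y => f (y, s))
      ((fderiv ℝ f (x, s)).comp ((ContinuousLinearMap.id ℝ X3).prod 0)) x :=
  ((hf.differentiable (by simp) (x, s)).hasFDerivAt).comp x
    ((hasFDerivAt_id x).prodMk (hasFDerivAt_const s x))

lemma contDiff_slice {f : P3 → 𝔨} (hf : ContDiff ℝ (⊤ : ℕ∞) f) (s : ℝ) :
    ContDiff ℝ (⊤ : ℕ∞) (fun y => f (y, s)) :=
  hf.comp (contDiff_id.prodMk contDiff_const)

lemma pd3_slice {f : P3 → 𝔨} (hf : ContDiff ℝ (⊤ : ℕ∞) f) (j : Fin 3) (x : X3) (s : ℝ) :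
    pd3 j (fun y => f (y, s)) x = fderiv ℝ f (x, s) (Pi.single j 1, 0) := by
  rw [pd3, (hasFDerivAt_slice hf x s).fderiv]
  rfl

lemma contDiff_fderiv_apply {f : P3 → 𝔨} (hf : ContDiff ℝ (⊤ : ℕ∞) f) (v : P3) :
    ContDiff ℝ (⊤ : ℕ∞) (fun p => fderiv ℝ f p v) :=
  (hf.fderiv_right (m := (⊤ : ℕ∞)) (by exact_mod_cast le_top)).clm_apply contDiff_const

lemma fderiv_swap {f : P3 → 𝔨} (hf : ContDiff ℝ (⊤ : ℕ∞) f) (q v w : P3) :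
    fderiv ℝ (fun p => fderiv ℝ f p v) q w = fderiv ℝ (fun p => fderiv ℝ f p w) q v := by
  have h2 : HasFDerivAt (fderiv ℝ f) (fderiv ℝ (fderiv ℝ f) q) q :=
    (((hf.fderiv_right (m := (⊤ : ℕ∞)) (by exact_mod_cast le_top)).differentiable (by simp)) q).hasFDerivAt
  have hsymm := second_derivative_symmetric
    (fun p => ((hf.differentiable (by simp) p).hasFDerivAt)) h2 v w
  have hv : HasFDerivAt (fun p => fderiv ℝ f p v)
      ((ContinuousLinearMap.apply ℝ 𝔨 v).comp (fderiv ℝ (fderiv ℝ f) q)) q :=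
    ((ContinuousLinearMap.apply ℝ 𝔨 v).hasFDerivAt).comp q h2
  have hw : HasFDerivAt (fun p => fderiv ℝ f p w)
      ((ContinuousLinearMap.apply ℝ 𝔨 w).comp (fderiv ℝ (fderiv ℝ f) q)) q :=
    ((ContinuousLinearMap.apply ℝ 𝔨 w).hasFDerivAt).comp q h2
  rw [hv.fderiv, hw.fderiv]
  exact hsymm.symm

/-- one-sided vanishing kills the two-sided derivative -/
lemma deriv_eq_zero_of_nonneg {g : ℝ → 𝔨} {s : ℝ} (hg : DifferentiableAt ℝ g s)
    (hs : 0 ≤ s) (h0 : ∀ σ, 0 ≤ σ → g σ = 0) : deriv g s = 0 := by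
  have h1 : HasDerivWithinAt g (deriv g s) (Ici s) s :=
    hg.hasDerivAt.hasDerivWithinAt
  have h2 : HasDerivWithinAt g 0 (Ici s) s := by
    have : HasDerivWithinAt (fun _ : ℝ => (0 : 𝔨)) 0 (Ici s) s :=
      (hasDerivWithinAt_const s _ 0)
    exact this.congr (fun σ hσ => h0 σ (le_trans hs hσ)) (h0 s hs)
  exact ((uniqueDiffOn_Ici s s self_mem_Ici).eq_deriv _ h1 h2)

noncomputable def Bc {𝔨 : Type*} [NormedAddCommGroup 𝔨] [NormedSpace ℝ 𝔨]
    [FiniteDimensional ℝ 𝔨] (β : 𝔨 →ₗ[ℝ] 𝔨 →ₗ[ℝ] 𝔨) : 𝔨 →L[ℝ] 𝔨 →L[ℝ] 𝔨 :=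
  LinearMap.toContinuousLinearMap
    { toFun := fun x => LinearMap.toContinuousLinearMap (β x)
      map_add' := by intro a b; ext z; simp
      map_smul' := by intro a b; ext z; simp }
lemma Bc_apply {𝔨 : Type*} [NormedAddCommGroup 𝔨] [NormedSpace ℝ 𝔨]
    [FiniteDimensional ℝ 𝔨] (β : 𝔨 →ₗ[ℝ] 𝔨 →ₗ[ℝ] 𝔨) (x y : 𝔨) :
    Bc β x y = β x y := rfl

-- ============ new material ============
section main
variable [FiniteDimensional ℝ 𝔨]
variable (β : 𝔨 →ₗ[ℝ] 𝔨 →ₗ[ℝ] 𝔨) (𝔞 : Fin 3 → X3 → ℝ → 𝔨)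

/-- time derivative of the potential -/
noncomputable def At (j : Fin 3) (x : X3) (s : ℝ) : 𝔨 := deriv (fun σ => 𝔞 j x σ) s
/-- second time derivative -/
noncomputable def At2 (j : Fin 3) (x : X3) (s : ℝ) : 𝔨 := deriv (fun σ => At 𝔞 j x σ) s
/-- time derivative of the curvature -/
noncomputable def Bt (j k : Fin 3) (x : X3) (s : ℝ) : 𝔨 :=
  deriv (fun σ => curvK β 𝔞 j k x σ) s

variable {𝔞}
variable (h𝔞 : ∀ j, ContDiff ℝ (⊤ : ℕ∞) fun p : P3 => 𝔞 j p.1 p.2)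
include h𝔞

lemma hasDerivAt_At (j : Fin 3) (x : X3) (s : ℝ) :
    HasDerivAt (fun σ => 𝔞 j x σ) (At 𝔞 j x s) s := by
  have h := hasDerivAt_slice (h𝔞 j) x s
  have : At 𝔞 j x s = fderiv ℝ (fun p : P3 => 𝔞 j p.1 p.2) (x, s) (0, 1) := h.deriv
  rw [this]; exact h

lemma At_eq (j : Fin 3) (x : X3) (s : ℝ) :
    At 𝔞 j x s = fderiv ℝ (fun p : P3 => 𝔞 j p.1 p.2) (x, s) (0, 1) :=
  (hasDerivAt_slice (h𝔞 j) x s).deriv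

lemma contDiff_At (j : Fin 3) :
    ContDiff ℝ (⊤ : ℕ∞) (fun p : P3 => At 𝔞 j p.1 p.2) := by
  have : (fun p : P3 => At 𝔞 j p.1 p.2)
      = fun p => fderiv ℝ (fun p : P3 => 𝔞 j p.1 p.2) p (0, 1) := by
    funext p; exact At_eq h𝔞 j p.1 p.2
  rw [this]; exact contDiff_fderiv_apply (h𝔞 j) _

lemma hasDerivAt_At2 (j : Fin 3) (x : X3) (s : ℝ) :
    HasDerivAt (fun σ => At 𝔞 j x σ) (At2 𝔞 j x s) s := by
  have h := hasDerivAt_slice (contDiff_At h𝔞 j) x s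
  have : At2 𝔞 j x s
      = fderiv ℝ (fun p : P3 => At 𝔞 j p.1 p.2) (x, s) (0, 1) := h.deriv
  rw [this]; exact h

lemma contDiff_At2 (j : Fin 3) :
    ContDiff ℝ (⊤ : ℕ∞) (fun p : P3 => At2 𝔞 j p.1 p.2) := by
  have : (fun p : P3 => At2 𝔞 j p.1 p.2)
      = fun p => fderiv ℝ (fun p : P3 => At 𝔞 j p.1 p.2) p (0, 1) := by
    funext p; exact (hasDerivAt_slice (contDiff_At h𝔞 j) p.1 p.2).deriv
  rw [this]; exact contDiff_fderiv_apply (contDiff_At h𝔞 j) _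

lemma curv_eq (j k : Fin 3) (x : X3) (s : ℝ) :
    curvK β 𝔞 j k x s
      = fderiv ℝ (fun p : P3 => 𝔞 k p.1 p.2) (x, s) (Pi.single j 1, 0)
        - fderiv ℝ (fun p : P3 => 𝔞 j p.1 p.2) (x, s) (Pi.single k 1, 0)
        + Bc β (𝔞 j x s) (𝔞 k x s) := by
  rw [curvK, pd3_slice (h𝔞 k), pd3_slice (h𝔞 j), Bc_apply]

lemma contDiff_curv (j k : Fin 3) :
    ContDiff ℝ (⊤ : ℕ∞) (fun p : P3 => curvK β 𝔞 j k p.1 p.2) := by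
  have : (fun p : P3 => curvK β 𝔞 j k p.1 p.2)
      = fun p : P3 => fderiv ℝ (fun p : P3 => 𝔞 k p.1 p.2) p (Pi.single j 1, 0)
        - fderiv ℝ (fun p : P3 => 𝔞 j p.1 p.2) p (Pi.single k 1, 0)
        + Bc β (𝔞 j p.1 p.2) (𝔞 k p.1 p.2) := by
    funext p; exact curv_eq β h𝔞 j k p.1 p.2
  rw [this]
  exact ((contDiff_fderiv_apply (h𝔞 k) _).sub (contDiff_fderiv_apply (h𝔞 j) _)).add
    (((Bc β).contDiff.comp (h𝔞 j)).clm_apply (h𝔞 k))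

/-- mixed partials commute: `∂_s ∂_j 𝔞_k = ∂_j ∂_s 𝔞_k`. -/
lemma hasDerivAt_pd3 (j k : Fin 3) (x : X3) (s : ℝ) :
    HasDerivAt (fun σ => pd3 j (fun y => 𝔞 k y σ) x)
      (pd3 j (fun y => At 𝔞 k y s) x) s := by
  have hrw : (fun σ => pd3 j (fun y => 𝔞 k y σ) x)
      = fun σ => (fun p : P3 => fderiv ℝ (fun p : P3 => 𝔞 k p.1 p.2) p (Pi.single j 1, 0))
          (x, σ) := by
    funext σ; exact pd3_slice (h𝔞 k) j x σ
  have h := hasDerivAt_slice (contDiff_fderiv_apply (h𝔞 k) (Pi.single j 1, 0)) x s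
  rw [hrw]
  convert h using 1
  -- pd3 j (At k ·) x = fderiv (fderiv 𝔞k · (e_j,0)) (x,s) (0,1)
  have h1 : pd3 j (fun y => At 𝔞 k y s) x
      = fderiv ℝ (fun p : P3 => At 𝔞 k p.1 p.2) (x, s) (Pi.single j 1, 0) := by
    have := pd3_slice (contDiff_At h𝔞 k) j x s
    exact this
  rw [h1]
  have h2 : (fun p : P3 => At 𝔞 k p.1 p.2)
      = fun p => fderiv ℝ (fun p : P3 => 𝔞 k p.1 p.2) p (0, 1) := by
    funext p; exact At_eq h𝔞 k p.1 p.2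
  rw [h2]
  exact fderiv_swap (h𝔞 k) (x, s) (0, 1) (Pi.single j 1, 0)

lemma hasDerivAt_curv (j k : Fin 3) (x : X3) (s : ℝ) :
    HasDerivAt (fun σ => curvK β 𝔞 j k x σ) (Bt β 𝔞 j k x s) s := by
  have h := hasDerivAt_slice (contDiff_curv β h𝔞 j k) x s
  have : Bt β 𝔞 j k x s
      = fderiv ℝ (fun p : P3 => curvK β 𝔞 j k p.1 p.2) (x, s) (0, 1) := h.deriv
  rw [this]; exact h

lemma Bt_eq (j k : Fin 3) (x : X3) (s : ℝ) :
    Bt β 𝔞 j k x s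
      = pd3 j (fun y => At 𝔞 k y s) x - pd3 k (fun y => At 𝔞 j y s) x
        + (β (At 𝔞 j x s) (𝔞 k x s) + β (𝔞 j x s) (At 𝔞 k x s)) := by
  have hder : HasDerivAt (fun σ => curvK β 𝔞 j k x σ)
      (pd3 j (fun y => At 𝔞 k y s) x - pd3 k (fun y => At 𝔞 j y s) x
        + (Bc β (At 𝔞 j x s) (𝔞 k x s) + Bc β (𝔞 j x s) (At 𝔞 k x s))) s := by
    have h1 := hasDerivAt_pd3 h𝔞 j k x s
    have h2 := hasDerivAt_pd3 h𝔞 k j x s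
    have h3 : HasDerivAt (fun σ => Bc β (𝔞 j x σ) (𝔞 k x σ))
        (Bc β (At 𝔞 j x s) (𝔞 k x s) + Bc β (𝔞 j x s) (At 𝔞 k x s)) s := by
      have hj := hasDerivAt_At h𝔞 j x s
      have hk := hasDerivAt_At h𝔞 k x s
      have hc : HasDerivAt (fun σ => Bc β (𝔞 j x σ)) (Bc β (At 𝔞 j x s)) s :=
        (Bc β).hasFDerivAt.comp_hasDerivAt s hj
      exact hc.clm_apply hk
    exact (h1.sub h2).add h3
  have := (hasDerivAt_curv β h𝔞 j k x s).unique hder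
  simpa [Bc_apply] using this
end main

section integr
variable {R : ℝ}

lemma zpd3 {𝔨 : Type*} [NormedAddCommGroup 𝔨] [NormedSpace ℝ 𝔨] {g : X3 → 𝔨} (hzg : ∀ y : X3, R ≤ ‖y‖ → g y = 0) {x : X3}
    (hx : R + 1 ≤ ‖x‖) (j : Fin 3) : pd3 j g x = 0 := by
  have hev : g =ᶠ[nhds x] fun _ => (0 : 𝔨) := by
    filter_upwards [Metric.ball_mem_nhds x one_pos] with y hy
    refine hzg y ?_
    have h1 : ‖x - y‖ < 1 := by
      rw [← dist_eq_norm]; exact dist_comm x y ▸ hy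
    have h2 : ‖x‖ - ‖y‖ ≤ ‖x - y‖ := norm_sub_norm_le x y
    linarith
  rw [pd3, hev.fderiv_eq]
  simp


lemma integrable_supp {g : X3 → ℝ} (hg : Continuous g)
    (hz : ∀ x : X3, R ≤ ‖x‖ → g x = 0) : Integrable g := by
  have hsub : tsupport g ⊆ closedBall (0 : X3) (max R 0) := by
    refine closure_minimal ?_ Metric.isClosed_closedBall
    intro x hx
    rw [Function.mem_support] at hx
    rw [mem_closedBall, dist_zero_right]
    by_contra hlt
    push_neg at hlt
    exact hx (hz x (le_trans (le_max_left _ _) hlt.le))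
  exact hg.integrable_of_hasCompactSupport
    (IsCompact.of_isClosed_subset (isCompact_closedBall _ _) (isClosed_tsupport g) hsub)


lemma key_ibp {g : X3 → ℝ} (hg : ContDiff ℝ (⊤ : ℕ∞) g) (hR : 0 ≤ R)
    (hz : ∀ x : X3, R ≤ ‖x‖ → g x = 0) (k : Fin 3) :
    ∫ x : X3, pd3 k g x = 0 := by
  classical
  set a : X3 := fun _ => -(R + 1) with ha
  set b : X3 := fun _ => R + 1 with hb
  have hle : a ≤ b := fun i => by simp [ha, hb]; linarith
  set f : Fin 3 → X3 → ℝ := fun i => if i = k then g else fun _ => 0 with hf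
  set f' : Fin 3 → X3 → X3 →L[ℝ] ℝ :=
    fun i x => if i = k then fderiv ℝ g x else 0 with hf'
  have hdiv : ∀ x : X3, (∑ i, f' i x (Pi.single i (1 : ℝ))) = pd3 k g x := by
    intro x
    rw [hf']
    have hterm : ∀ i : Fin 3, ((if i = k then fderiv ℝ g x else 0) : X3 →L[ℝ] ℝ)
        (Pi.single i (1 : ℝ))
        = if i = k then fderiv ℝ g x (Pi.single i 1) else 0 := by
      intro i; by_cases h : i = k <;> simp [h]
    rw [Finset.sum_congr rfl fun i _ => hterm i,
      Finset.sum_ite_eq' Finset.univ k fun i => fderiv ℝ g x (Pi.single i 1)]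
    simp [pd3]
  have hcont_pd : Continuous fun x => pd3 k g x := by
    have : (fun x => pd3 k g x) = fun x => fderiv ℝ g x (Pi.single k 1) := rfl
    rw [this]
    exact ((hg.fderiv_right (m := (⊤ : ℕ∞))
      (by exact_mod_cast le_top)).clm_apply contDiff_const).continuous
  have H := MeasureTheory.integral_divergence_of_hasFDerivAt_off_countable'
    (a := a) (b := b) hle f f' ∅ Set.countable_empty
    (fun i => by
      by_cases hik : i = k
      · subst hik; simpa [hf] using hg.continuous.continuousOn
      · simp only [hf, if_neg hik]; exact continuousOn_const)
    (fun x _ i => by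
      by_cases hik : i = k
      · subst hik
        simpa [hf, hf'] using
          (hg.differentiable (by simp) x).hasFDerivAt
      · simp only [hf, hf', if_neg hik]; exact hasFDerivAt_const 0 x)
    (by
      refine (ContinuousOn.integrableOn_compact isCompact_Icc ?_)
      exact (continuous_finset_sum _ fun i _ => by
        by_cases hik : i = k
        · subst hik; simpa [hf'] using ((hg.fderiv_right (m := (⊤ : ℕ∞))
            (by exact_mod_cast le_top)).clm_apply contDiff_const).continuous
        · simp only [hf', if_neg hik]; exact continuous_const).continuousOn)
  have hfaces : ∀ i : Fin 3,
      ((∫ x in Set.Icc (a ∘ i.succAbove) (b ∘ i.succAbove),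
          f i (i.insertNth (b i) x)) -
        ∫ x in Set.Icc (a ∘ i.succAbove) (b ∘ i.succAbove),
          f i (i.insertNth (a i) x)) = 0 := by
    intro i
    have hzero : ∀ (c : ℝ), R + 1 ≤ |c| →
        ∀ x : Fin 2 → ℝ, f i (i.insertNth c x) = 0 := by
      intro c hc x
      by_cases hik : i = k
      · subst hik
        simp only [hf, if_pos rfl]
        refine hz _ ?_
        have h1 : ‖(i.insertNth c x : X3) i‖ ≤ ‖(i.insertNth c x : X3)‖ :=
          norm_le_pi_norm _ i
        rw [Fin.insertNth_apply_same] at h1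
        have h2 : |c| ≤ ‖(i.insertNth c x : X3)‖ := h1
        linarith
      · simp [hf, if_neg hik]
    have h1 : ∀ x : Fin 2 → ℝ, f i (i.insertNth (b i) x) = 0 :=
      hzero (b i) (by
        show R + 1 ≤ |R + 1|
        rw [abs_of_nonneg (by linarith : (0:ℝ) ≤ R + 1)])
    have h2 : ∀ x : Fin 2 → ℝ, f i (i.insertNth (a i) x) = 0 :=
      hzero (a i) (by
        show R + 1 ≤ |-(R + 1)|
        rw [abs_neg, abs_of_nonneg (by linarith : (0:ℝ) ≤ R + 1)])
    simp only [h1, h2, integral_zero, sub_zero]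
  have hout : ∀ x : X3, x ∉ Set.Icc a b → pd3 k g x = 0 := by
    intro x hx
    have hnorm : R + 1 ≤ ‖x‖ := by
      rw [Set.mem_Icc, not_and_or] at hx
      rcases hx with h | h
      · rw [Pi.le_def] at h; push_neg at h
        obtain ⟨i, hi⟩ := h
        have h1 : |x i| ≤ ‖x‖ := norm_le_pi_norm x i
        have h2 : -(x i) ≤ |x i| := neg_le_abs _
        simp only [ha] at hi
        linarith
      · rw [Pi.le_def] at h; push_neg at h
        obtain ⟨i, hi⟩ := h
        have h1 : |x i| ≤ ‖x‖ := norm_le_pi_norm x i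
        have h2 : x i ≤ |x i| := le_abs_self _
        simp only [hb] at hi
        linarith
    exact zpd3 (R := R) hz hnorm k
  calc ∫ x : X3, pd3 k g x = ∫ x in Set.Icc a b, pd3 k g x :=
        (MeasureTheory.setIntegral_eq_integral_of_forall_compl_eq_zero hout).symm
    _ = ∫ x in Set.Icc a b, ∑ i, f' i x (Pi.single i (1 : ℝ)) :=
        (MeasureTheory.setIntegral_congr_fun measurableSet_Icc
          fun x _ => (hdiv x).symm)
    _ = 0 := by
        rw [H]
        exact Finset.sum_eq_zero fun i _ => hfaces i

end integr

section energy
variable {𝔨 : Type*} [NormedAddCommGroup 𝔨] [InnerProductSpace ℝ 𝔨]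
  [FiniteDimensional ℝ 𝔨]
variable (β : 𝔨 →ₗ[ℝ] 𝔨 →ₗ[ℝ] 𝔨) (𝔞 : Fin 3 → X3 → ℝ → 𝔨)

local notation "⟪" a ", " b "⟫" => (inner ℝ a b : ℝ)

/-- energy density -/
noncomputable def Ee (x : X3) (s : ℝ) : ℝ :=
  (∑ j, ⟪At 𝔞 j x s, At 𝔞 j x s⟫)
    - (1/2) * ∑ j, ∑ k, ⟪curvK β 𝔞 j k x s, curvK β 𝔞 j k x s⟫

/-- time derivative of the energy density -/
noncomputable def Ee' (x : X3) (s : ℝ) : ℝ :=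
  (∑ j, (⟪At 𝔞 j x s, At2 𝔞 j x s⟫ + ⟪At2 𝔞 j x s, At 𝔞 j x s⟫))
    - (1/2) * ∑ j, ∑ k, (⟪curvK β 𝔞 j k x s, Bt β 𝔞 j k x s⟫
        + ⟪Bt β 𝔞 j k x s, curvK β 𝔞 j k x s⟫)

variable {𝔞}
variable (h𝔞 : ∀ j, ContDiff ℝ (⊤ : ℕ∞) fun p : P3 => 𝔞 j p.1 p.2)
include h𝔞

lemma hasDerivAt_Ee (x : X3) (s : ℝ) :
    HasDerivAt (fun σ => Ee β 𝔞 x σ) (Ee' β 𝔞 x s) s := by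
  refine HasDerivAt.sub (HasDerivAt.fun_sum fun j _ => ?_)
    (HasDerivAt.const_mul _ (HasDerivAt.fun_sum fun j _ => HasDerivAt.fun_sum fun k _ => ?_))
  · exact (hasDerivAt_At2 h𝔞 j x s).inner ℝ (hasDerivAt_At2 h𝔞 j x s)
  · exact (hasDerivAt_curv β h𝔞 j k x s).inner ℝ (hasDerivAt_curv β h𝔞 j k x s)

lemma continuous_Ee : Continuous fun p : P3 => Ee β 𝔞 p.1 p.2 := by
  refine Continuous.sub (continuous_finset_sum _ fun j _ => ?_)
    (Continuous.mul continuous_const (continuous_finset_sum _ fun j _ =>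
      continuous_finset_sum _ fun k _ => ?_))
  · exact ((contDiff_At h𝔞 j).continuous).inner ((contDiff_At h𝔞 j).continuous)
  · exact ((contDiff_curv β h𝔞 j k).continuous).inner ((contDiff_curv β h𝔞 j k).continuous)

lemma continuous_Ee' : Continuous fun p : P3 => Ee' β 𝔞 p.1 p.2 := by
  have hBt : ∀ j k, Continuous fun p : P3 => Bt β 𝔞 j k p.1 p.2 := by
    intro j k
    have : (fun p : P3 => Bt β 𝔞 j k p.1 p.2)
        = fun p => fderiv ℝ (fun p : P3 => curvK β 𝔞 j k p.1 p.2) p (0, 1) := by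
      funext p; exact (hasDerivAt_slice (contDiff_curv β h𝔞 j k) p.1 p.2).deriv
    rw [this]; exact (contDiff_fderiv_apply (contDiff_curv β h𝔞 j k) _).continuous
  refine Continuous.sub (continuous_finset_sum _ fun j _ => Continuous.add ?_ ?_)
    (Continuous.mul continuous_const (continuous_finset_sum _ fun j _ =>
      continuous_finset_sum _ fun k _ => Continuous.add ?_ ?_))
  · exact ((contDiff_At h𝔞 j).continuous).inner ((contDiff_At2 h𝔞 j).continuous)
  · exact ((contDiff_At2 h𝔞 j).continuous).inner ((contDiff_At h𝔞 j).continuous)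
  · exact ((contDiff_curv β h𝔞 j k).continuous).inner (hBt j k)
  · exact (hBt j k).inner ((contDiff_curv β h𝔞 j k).continuous)

section support
variable {R : ℝ}
variable (hz : ∀ j (x : X3) (s : ℝ), 0 ≤ s → R ≤ ‖x‖ → 𝔞 j x s = 0)
include hz

lemma zAt {x : X3} {s : ℝ} (hs : 0 ≤ s) (hx : R ≤ ‖x‖) (j : Fin 3) :
    At 𝔞 j x s = 0 :=
  deriv_eq_zero_of_nonneg (hasDerivAt_At h𝔞 j x s).differentiableAt hs
    (fun σ hσ => hz j x σ hσ hx)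

lemma zAt2 {x : X3} {s : ℝ} (hs : 0 ≤ s) (hx : R ≤ ‖x‖) (j : Fin 3) :
    At2 𝔞 j x s = 0 :=
  deriv_eq_zero_of_nonneg (hasDerivAt_At2 h𝔞 j x s).differentiableAt hs
    (fun σ hσ => zAt h𝔞 hz hσ hx j)

lemma zcurv {x : X3} {s : ℝ} (hs : 0 ≤ s) (hx : R + 1 ≤ ‖x‖) (j k : Fin 3) :
    curvK β 𝔞 j k x s = 0 := by
  have hxR : R ≤ ‖x‖ := by linarith
  rw [curvK, zpd3 (R := R) (fun y hy => hz k y s hs hy) hx,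
    zpd3 (R := R) (fun y hy => hz j y s hs hy) hx, hz j x s hs hxR]
  simp

lemma zEe {x : X3} {s : ℝ} (hs : 0 ≤ s) (hx : R + 1 ≤ ‖x‖) : Ee β 𝔞 x s = 0 := by
  have hxR : R ≤ ‖x‖ := by linarith
  rw [Ee]
  simp [zAt h𝔞 hz hs hxR, zcurv β h𝔞 hz hs hx]

lemma zEe' {x : X3} {s : ℝ} (hs : 0 ≤ s) (hx : R + 1 ≤ ‖x‖) : Ee' β 𝔞 x s = 0 := by
  have hxR : R ≤ ‖x‖ := by linarith
  rw [Ee']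
  simp [zAt h𝔞 hz hs hxR, zcurv β h𝔞 hz hs hx]

end support

section identity
variable (halt : ∀ x : 𝔨, β x x = 0)
variable (hinv : ∀ x y z : 𝔨, (inner ℝ (β z x) y : ℝ) + (inner ℝ x (β z y) : ℝ) = 0)
variable (hYMP : YangMillsPoissonK β 𝔞)

omit h𝔞 in
include halt in
lemma beta_anti (u v : 𝔨) : β u v = -β v u := by
  have h := halt (u + v)
  simp only [map_add, LinearMap.add_apply, halt, zero_add, add_zero] at h
  have h2 : β v u + β u v = 0 := by simpa using h
  exact eq_neg_of_add_eq_zero_right h2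

include halt in
omit h𝔞 in
lemma curv_anti (j k : Fin 3) (x : X3) (s : ℝ) :
    curvK β 𝔞 k j x s = -curvK β 𝔞 j k x s := by
  rw [curvK, curvK, beta_anti β halt (𝔞 k x s) (𝔞 j x s)]
  abel

include halt hinv hYMP in
lemma Ee'_eq_div {s : ℝ} (hs : 0 ≤ s) (x : X3) :
    Ee' β 𝔞 x s
      = ∑ j, ∑ k,
          (-2 : ℝ) * pd3 k (fun y => ⟪curvK β 𝔞 k j y s, At 𝔞 j y s⟫) x := by
  have hinner2 : ∀ u v : 𝔨, ⟪u, v⟫ + ⟪v, u⟫ = 2 * ⟪v, u⟫ := by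
    intro u v; rw [real_inner_comm u v]; ring
  have main : ∀ u v t1 t2 : Fin 3 → Fin 3 → ℝ, (∀ j k, v j k + t2 j k = 0) →
      (∑ j, ∑ k, (-2 : ℝ) * (u j k + v j k))
        - (1/2) * ∑ j, ∑ k, 2 * (t1 k j + t1 j k + (t2 j k + t2 k j))
      = ∑ j, ∑ k, (-2 : ℝ) * (t1 j k + u j k) := by
    intro u v t1 t2 hvz
    have hc1 : (∑ j, ∑ k, t1 k j) = ∑ j : Fin 3, ∑ k, t1 j k := Finset.sum_comm
    have hc2 : (∑ j, ∑ k, t2 k j) = ∑ j : Fin 3, ∑ k, t2 j k := Finset.sum_comm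
    have hV : (∑ j : Fin 3, ∑ k, v j k) + (∑ j : Fin 3, ∑ k, t2 j k) = 0 := by
      rw [← Finset.sum_add_distrib]
      simp only [← Finset.sum_add_distrib]
      simp [hvz]
    simp only [mul_add, Finset.sum_add_distrib, ← Finset.mul_sum]
    linarith [hc1, hc2, hV]
  have hymp : ∀ j, At2 𝔞 j x s = -∑ k, (pd3 k (fun y => curvK β 𝔞 k j y s) x
      + β (𝔞 k x s) (curvK β 𝔞 k j x s)) := fun j => hYMP j x s hs
  have hYj : ∀ j, ⟪At 𝔞 j x s, At2 𝔞 j x s⟫ + ⟪At2 𝔞 j x s, At 𝔞 j x s⟫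
      = ∑ k, (-2 : ℝ) * (⟪pd3 k (fun y => curvK β 𝔞 k j y s) x, At 𝔞 j x s⟫
          + ⟪β (𝔞 k x s) (curvK β 𝔞 k j x s), At 𝔞 j x s⟫) := by
    intro j
    rw [hinner2, hymp j, inner_neg_left, sum_inner]
    simp only [inner_add_left]
    rw [← Finset.mul_sum]
    ring
  have hq : ∀ j k, ⟪curvK β 𝔞 j k x s, Bt β 𝔞 j k x s⟫
        + ⟪Bt β 𝔞 j k x s, curvK β 𝔞 j k x s⟫
      = 2 * ((⟪pd3 j (fun y => At 𝔞 k y s) x, curvK β 𝔞 j k x s⟫)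
          + (⟪pd3 k (fun y => At 𝔞 j y s) x, curvK β 𝔞 k j x s⟫)
          + ((⟪β (𝔞 k x s) (At 𝔞 j x s), curvK β 𝔞 k j x s⟫)
            + (⟪β (𝔞 j x s) (At 𝔞 k x s), curvK β 𝔞 j k x s⟫))) := by
    intro j k
    rw [hinner2, Bt_eq β h𝔞 j k x s]
    simp only [inner_add_left, inner_sub_left]
    rw [curv_anti β halt j k x s, beta_anti β halt (𝔞 k x s) (At 𝔞 j x s)]
    simp only [inner_neg_left, inner_neg_right]
    ring
  have hprod : ∀ j k : Fin 3,
      pd3 k (fun y => ⟪curvK β 𝔞 k j y s, At 𝔞 j y s⟫) x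
        = ⟪pd3 k (fun y => At 𝔞 j y s) x, curvK β 𝔞 k j x s⟫
          + ⟪pd3 k (fun y => curvK β 𝔞 k j y s) x, At 𝔞 j x s⟫ := by
    intro j k
    have hf : DifferentiableAt ℝ (fun y => curvK β 𝔞 k j y s) x :=
      ((contDiff_slice (contDiff_curv β h𝔞 k j) s).differentiable
        (by simp)) x
    have hg : DifferentiableAt ℝ (fun y => At 𝔞 j y s) x :=
      ((contDiff_slice (contDiff_At h𝔞 j) s).differentiable
        (by simp)) x
    rw [pd3, fderiv_inner_apply ℝ hf hg (Pi.single k 1),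
      real_inner_comm (curvK β 𝔞 k j x s)]
    rfl
  have hvz : ∀ j k : Fin 3,
      (⟪β (𝔞 k x s) (curvK β 𝔞 k j x s), At 𝔞 j x s⟫ : ℝ)
        + ⟪β (𝔞 k x s) (At 𝔞 j x s), curvK β 𝔞 k j x s⟫ = 0 := by
    intro j k
    have h := hinv (curvK β 𝔞 k j x s) (At 𝔞 j x s) (𝔞 k x s)
    linarith [h, real_inner_comm (curvK β 𝔞 k j x s) ((β (𝔞 k x s)) (At 𝔞 j x s))]
  calc Ee' β 𝔞 x s
      = (∑ j, ∑ k, (-2 : ℝ)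
            * (⟪pd3 k (fun y => curvK β 𝔞 k j y s) x, At 𝔞 j x s⟫
              + ⟪β (𝔞 k x s) (curvK β 𝔞 k j x s), At 𝔞 j x s⟫))
          - (1/2) * ∑ j, ∑ k, 2
            * ((⟪pd3 j (fun y => At 𝔞 k y s) x, curvK β 𝔞 j k x s⟫)
              + (⟪pd3 k (fun y => At 𝔞 j y s) x, curvK β 𝔞 k j x s⟫)
              + ((⟪β (𝔞 k x s) (At 𝔞 j x s), curvK β 𝔞 k j x s⟫)
                + (⟪β (𝔞 j x s) (At 𝔞 k x s), curvK β 𝔞 j k x s⟫))) := by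
        rw [Ee']
        congr 1
        · exact Finset.sum_congr rfl fun j _ => hYj j
        · congr 1
          exact Finset.sum_congr rfl fun j _ =>
            Finset.sum_congr rfl fun k _ => hq j k
    _ = ∑ j, ∑ k, (-2 : ℝ)
          * (⟪pd3 k (fun y => At 𝔞 j y s) x, curvK β 𝔞 k j x s⟫
            + ⟪pd3 k (fun y => curvK β 𝔞 k j y s) x, At 𝔞 j x s⟫) := by
        have := main
          (fun j k => ⟪pd3 k (fun y => curvK β 𝔞 k j y s) x, At 𝔞 j x s⟫)
          (fun j k => ⟪β (𝔞 k x s) (curvK β 𝔞 k j x s), At 𝔞 j x s⟫)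
          (fun j k => ⟪pd3 k (fun y => At 𝔞 j y s) x, curvK β 𝔞 k j x s⟫)
          (fun j k => ⟪β (𝔞 k x s) (At 𝔞 j x s), curvK β 𝔞 k j x s⟫)
          hvz
        exact this
    _ = ∑ j, ∑ k,
          (-2 : ℝ) * pd3 k (fun y => ⟪curvK β 𝔞 k j y s, At 𝔞 j y s⟫) x := by
        exact Finset.sum_congr rfl fun j _ => Finset.sum_congr rfl fun k _ => by
          rw [hprod j k]

end identity

section flow
variable {R : ℝ} (hR : 0 < R)
variable (hz : ∀ j (x : X3) (s : ℝ), 0 ≤ s → R ≤ ‖x‖ → 𝔞 j x s = 0)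

include hR hz in
lemma integral_Ee'_zero (halt : ∀ x : 𝔨, β x x = 0)
    (hinv : ∀ x y z : 𝔨, (inner ℝ (β z x) y : ℝ) + (inner ℝ x (β z y) : ℝ) = 0)
    (hYMP : YangMillsPoissonK β 𝔞) {s : ℝ} (hs : 0 ≤ s) :
    ∫ x : X3, Ee' β 𝔞 x s = 0 := by
  have hg : ∀ j k : Fin 3,
      ContDiff ℝ (⊤ : ℕ∞) (fun y => (⟪curvK β 𝔞 k j y s, At 𝔞 j y s⟫ : ℝ)) :=
    fun j k => ContDiff.inner ℝ (contDiff_slice (contDiff_curv β h𝔞 k j) s)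
      (contDiff_slice (contDiff_At h𝔞 j) s)
  have hgz : ∀ j k : Fin 3, ∀ y : X3, R + 1 ≤ ‖y‖ →
      (⟪curvK β 𝔞 k j y s, At 𝔞 j y s⟫ : ℝ) = 0 := by
    intro j k y hy
    rw [zcurv β h𝔞 hz hs hy, inner_zero_left]
  have hterm : ∀ j k : Fin 3, Integrable
      (fun x : X3 => (-2 : ℝ) * pd3 k (fun y => ⟪curvK β 𝔞 k j y s, At 𝔞 j y s⟫) x) := by
    intro j k
    refine Integrable.const_mul ?_ _
    refine integrable_supp (R := R + 2) ?_ ?_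
    · exact (((hg j k).fderiv_right (m := (⊤ : ℕ∞))
        (by exact_mod_cast le_top)).clm_apply contDiff_const).continuous
    · intro x hx
      exact zpd3 (R := R + 1) (hgz j k) (by linarith) k
  have hrw : (fun x : X3 => Ee' β 𝔞 x s)
      = fun x => ∑ j, ∑ k, (-2 : ℝ)
          * pd3 k (fun y => ⟪curvK β 𝔞 k j y s, At 𝔞 j y s⟫) x :=
    funext fun x => Ee'_eq_div β h𝔞 halt hinv hYMP hs x
  rw [hrw, integral_finset_sum _ (fun j _ => integrable_finset_sum _ fun k _ => hterm j k)]
  refine Finset.sum_eq_zero fun j _ => ?_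
  rw [integral_finset_sum _ fun k _ => hterm j k]
  refine Finset.sum_eq_zero fun k _ => ?_
  rw [integral_const_mul, key_ibp (hg j k) (by linarith : (0:ℝ) ≤ R + 1) (hgz j k) k,
    mul_zero]

include hR hz in
lemma integrable_Ee {s : ℝ} (hs : 0 ≤ s) :
    Integrable (fun x : X3 => Ee β 𝔞 x s) := by
  refine integrable_supp (R := R + 1) ?_ fun x hx => zEe β h𝔞 hz hs hx
  exact (continuous_Ee β h𝔞).comp (continuous_id.prodMk continuous_const)

include hR hz in
lemma hasDerivAt_F (halt : ∀ x : 𝔨, β x x = 0)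
    (hinv : ∀ x y z : 𝔨, (inner ℝ (β z x) y : ℝ) + (inner ℝ x (β z y) : ℝ) = 0)
    (hYMP : YangMillsPoissonK β 𝔞) {s : ℝ} (hs : 0 < s) :
    HasDerivAt (fun τ => ∫ x : X3, Ee β 𝔞 x τ) 0 s := by
  set K : Set X3 := closedBall (0 : X3) (R + 1) with hK
  have hKc : IsCompact K := isCompact_closedBall _ _
  have hSc : IsCompact (K ×ˢ Icc (s - 1) (s + 1)) := hKc.prod isCompact_Icc
  have hSne : (K ×ˢ Icc (s - 1) (s + 1)).Nonempty :=
    ⟨(0, s), by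
      constructor
      · simp [hK]; linarith
      · constructor <;> simp <;> linarith⟩
  obtain ⟨p₀, hp₀S, hp₀⟩ := hSc.exists_isMaxOn hSne
    ((continuous_Ee' β h𝔞).norm.continuousOn)
  set C : ℝ := ‖Ee' β 𝔞 p₀.1 p₀.2‖ with hC
  have hC0 : 0 ≤ C := norm_nonneg _
  have hCmax : ∀ q : X3 × ℝ, q ∈ K ×ˢ Icc (s - 1) (s + 1) →
      ‖Ee' β 𝔞 q.1 q.2‖ ≤ C := fun q hq => hp₀ hq
  set bound : X3 → ℝ := K.indicator (fun _ => C) with hbound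
  have hεpos : 0 < min s 1 := lt_min hs one_pos
  have hmain := (hasDerivAt_integral_of_dominated_loc_of_deriv_le (Metric.ball_mem_nhds s hεpos)
    (F := fun τ x => Ee β 𝔞 x τ)
    (F' := fun τ x => Ee' β 𝔞 x τ)
    (bound := bound)
    (Filter.Eventually.of_forall fun τ =>
      (((continuous_Ee β h𝔞).comp (continuous_id.prodMk continuous_const))).aestronglyMeasurable)
    (integrable_Ee β h𝔞 hR hz hs.le)
    (((continuous_Ee' β h𝔞).comp (continuous_id.prodMk continuous_const))).aestronglyMeasurable
    (Filter.Eventually.of_forall fun x => ?_)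
    ?_
    (Filter.Eventually.of_forall fun x τ _ => hasDerivAt_Ee β h𝔞 x τ)).2
  · rwa [integral_Ee'_zero β h𝔞 hR hz halt hinv hYMP hs.le] at hmain
  · -- bound
    intro τ hτ
    show ‖Ee' β 𝔞 x τ‖ ≤ bound x
    have habs : |τ - s| < min s 1 := by
      rw [← Real.dist_eq]; exact mem_ball_iff_norm.mp hτ
    have hτ0 : 0 ≤ τ := by
      have h1 : |τ - s| < s := lt_of_lt_of_le habs (min_le_left _ _)
      have := abs_lt.mp h1
      linarith [this.1]
    by_cases hxK : x ∈ K
    · have hb : bound x = C := by rw [hbound, Set.indicator_of_mem hxK]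
      rw [hb]
      have h1 : |τ - s| < 1 := lt_of_lt_of_le habs (min_le_right _ _)
      have h2 := abs_lt.mp h1
      refine hCmax (x, τ) ⟨hxK, ?_⟩
      constructor <;> simp <;> linarith [h2.1, h2.2]
    · have hxnorm : R + 1 ≤ ‖x‖ := by
        by_contra hlt
        push_neg at hlt
        exact hxK (by rw [hK, mem_closedBall, dist_zero_right]; linarith)
      have hb : bound x = 0 := by rw [hbound, Set.indicator_of_notMem hxK]
      rw [hb, zEe' β h𝔞 hz hτ0 hxnorm, norm_zero]
  · -- bound integrable
    refine MeasureTheory.IntegrableOn.integrable_indicator ?_ measurableSet_closedBall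
    exact integrableOn_const hKc.measure_lt_top.ne

include hR hz in
lemma continuousWithinAt_F : ContinuousWithinAt
    (fun τ => ∫ x : X3, Ee β 𝔞 x τ) (Ici 0) 0 := by
  set K : Set X3 := closedBall (0 : X3) (R + 1) with hK
  have hKc : IsCompact K := isCompact_closedBall _ _
  have hSc : IsCompact (K ×ˢ Icc (0:ℝ) 1) := hKc.prod isCompact_Icc
  have hSne : (K ×ˢ Icc (0:ℝ) 1).Nonempty :=
    ⟨(0, 0), by
      constructor
      · simp [hK]; linarith
      · constructor <;> norm_num⟩
  obtain ⟨p₀, hp₀S, hp₀⟩ := hSc.exists_isMaxOn hSne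
    ((continuous_Ee β h𝔞).norm.continuousOn)
  set C : ℝ := ‖Ee β 𝔞 p₀.1 p₀.2‖ with hC
  have hCmax : ∀ q : X3 × ℝ, q ∈ K ×ˢ Icc (0:ℝ) 1 →
      ‖Ee β 𝔞 q.1 q.2‖ ≤ C := fun q hq => hp₀ hq
  set bound : X3 → ℝ := K.indicator (fun _ => C) with hbound
  have hIic : Iic (1:ℝ) ∈ nhdsWithin (0:ℝ) (Ici 0) :=
    mem_nhdsWithin_of_mem_nhds (Iic_mem_nhds one_pos)
  refine MeasureTheory.continuousWithinAt_of_dominated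
    (bound := bound)
    (Filter.Eventually.of_forall fun τ =>
      (((continuous_Ee β h𝔞).comp (continuous_id.prodMk continuous_const))).aestronglyMeasurable)
    ?_ ?_
    (Filter.Eventually.of_forall fun x =>
      (hasDerivAt_Ee β h𝔞 x 0).continuousAt.continuousWithinAt)
  · filter_upwards [hIic, self_mem_nhdsWithin] with τ h1 h2
    refine Filter.Eventually.of_forall fun x => ?_
    show ‖Ee β 𝔞 x τ‖ ≤ bound x
    by_cases hxK : x ∈ K
    · have hb : bound x = C := by rw [hbound, Set.indicator_of_mem hxK]
      rw [hb]
      exact hCmax (x, τ) ⟨hxK, ⟨h2, h1⟩⟩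
    · have hxnorm : R + 1 ≤ ‖x‖ := by
        by_contra hlt
        push_neg at hlt
        exact hxK (by rw [hK, mem_closedBall, dist_zero_right]; linarith)
      have hb : bound x = 0 := by rw [hbound, Set.indicator_of_notMem hxK]
      rw [hb, zEe β h𝔞 hz h2 hxnorm, norm_zero]
  · refine MeasureTheory.IntegrableOn.integrable_indicator ?_ measurableSet_closedBall
    exact integrableOn_const hKc.measure_lt_top.ne

include hR hz in
lemma F_const (halt : ∀ x : 𝔨, β x x = 0)
    (hinv : ∀ x y z : 𝔨, (inner ℝ (β z x) y : ℝ) + (inner ℝ x (β z y) : ℝ) = 0)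
    (hYMP : YangMillsPoissonK β 𝔞) :
    ∀ s₁ s₂ : ℝ, 0 ≤ s₁ → 0 ≤ s₂ →
      (∫ x : X3, Ee β 𝔞 x s₁) = ∫ x : X3, Ee β 𝔞 x s₂ := by
  set F : ℝ → ℝ := fun τ => ∫ x : X3, Ee β 𝔞 x τ with hF
  have hpos : ∀ a b : ℝ, 0 < a → a ≤ b → F b = F a := by
    intro a b ha hab
    have hcont : ContinuousOn F (Icc a b) := fun τ hτ =>
      (hasDerivAt_F β h𝔞 hR hz halt hinv hYMP (lt_of_lt_of_le ha hτ.1)).continuousAt.continuousWithinAt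
    have hderiv : ∀ τ ∈ Ico a b, HasDerivWithinAt F 0 (Ici τ) τ := fun τ hτ =>
      (hasDerivAt_F β h𝔞 hR hz halt hinv hYMP (lt_of_lt_of_le ha hτ.1)).hasDerivWithinAt
    exact constant_of_has_deriv_right_zero hcont hderiv b (right_mem_Icc.2 hab)
  have hposall : ∀ a b : ℝ, 0 < a → 0 < b → F a = F b := by
    intro a b ha hb
    rcases le_total a b with h | h
    · exact (hpos a b ha h).symm
    · exact hpos b a hb h
  have h0 : ∀ b : ℝ, 0 < b → F 0 = F b := by
    intro b hb
    have hev : ∀ᶠ τ in nhdsWithin (0:ℝ) (Ioi 0), F τ = F b := by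
      filter_upwards [self_mem_nhdsWithin] with τ hτ
      exact hposall τ b hτ hb
    have hlim : Filter.Tendsto F (nhdsWithin (0:ℝ) (Ioi 0)) (nhds (F 0)) :=
      (continuousWithinAt_F β h𝔞 hR hz).mono Ioi_subset_Ici_self
    have hlim2 : Filter.Tendsto F (nhdsWithin (0:ℝ) (Ioi 0)) (nhds (F b)) :=
      Filter.Tendsto.congr' (Filter.EventuallyEq.symm hev) tendsto_const_nhds
    exact tendsto_nhds_unique hlim hlim2
  intro s₁ s₂ h₁ h₂
  rcases h₁.lt_or_eq with h₁' | h₁' <;> rcases h₂.lt_or_eq with h₂' | h₂'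
  · exact hposall s₁ s₂ h₁' h₂'
  · rw [← h₂']; exact (h0 s₁ h₁').symm
  · rw [← h₁']; exact h0 s₂ h₂'
  · rw [← h₁', ← h₂']

include hR hz in
lemma F_repr {s : ℝ} (hs : 0 ≤ s) :
    ((∑ j, ∫ x : X3, ‖At 𝔞 j x s‖ ^ 2)
      - (1 / 2) * ∑ j, ∑ k, ∫ x : X3, ‖curvK β 𝔞 j k x s‖ ^ 2)
    = ∫ x : X3, Ee β 𝔞 x s := by
  have hcA : ∀ j, Continuous fun x : X3 => (⟪At 𝔞 j x s, At 𝔞 j x s⟫ : ℝ) := fun j =>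
    ((contDiff_slice (contDiff_At h𝔞 j) s).continuous).inner
      ((contDiff_slice (contDiff_At h𝔞 j) s).continuous)
  have hcB : ∀ j k, Continuous fun x : X3 =>
      (⟪curvK β 𝔞 j k x s, curvK β 𝔞 j k x s⟫ : ℝ) := fun j k =>
    ((contDiff_slice (contDiff_curv β h𝔞 j k) s).continuous).inner
      ((contDiff_slice (contDiff_curv β h𝔞 j k) s).continuous)
  have h1 : ∀ j, Integrable fun x : X3 => (⟪At 𝔞 j x s, At 𝔞 j x s⟫ : ℝ) := fun j =>
    integrable_supp (R := R) (hcA j)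
      (fun x hx => by rw [zAt h𝔞 hz hs hx j, inner_zero_left])
  have h2 : ∀ j k, Integrable fun x : X3 =>
      (⟪curvK β 𝔞 j k x s, curvK β 𝔞 j k x s⟫ : ℝ) := fun j k =>
    integrable_supp (R := R + 1) (hcB j k)
      (fun x hx => by rw [zcurv β h𝔞 hz hs hx, inner_zero_left])
  have hEeint : (∫ x : X3, Ee β 𝔞 x s)
      = (∑ j, ∫ x : X3, (⟪At 𝔞 j x s, At 𝔞 j x s⟫ : ℝ))
        - (1 / 2) * ∑ j, ∑ k, ∫ x : X3,
            (⟪curvK β 𝔞 j k x s, curvK β 𝔞 j k x s⟫ : ℝ) := by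
    have e1 : (fun x : X3 => Ee β 𝔞 x s)
        = fun x => (∑ j, (⟪At 𝔞 j x s, At 𝔞 j x s⟫ : ℝ))
          - (1 / 2) * ∑ j, ∑ k,
              (⟪curvK β 𝔞 j k x s, curvK β 𝔞 j k x s⟫ : ℝ) := rfl
    rw [e1, integral_sub (integrable_finset_sum _ fun j _ => h1 j)
      ((integrable_finset_sum _ fun j _ =>
        integrable_finset_sum _ fun k _ => h2 j k).const_mul _),
      integral_finset_sum _ fun j _ => h1 j, integral_const_mul,
      integral_finset_sum _ fun j _ => integrable_finset_sum _ fun k _ => h2 j k]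
    congr 2
    exact Finset.sum_congr rfl fun j _ => integral_finset_sum _ fun k _ => h2 j k
  rw [hEeint]
  have e2 : ∀ j, (∫ x : X3, ‖At 𝔞 j x s‖ ^ 2)
      = ∫ x : X3, (⟪At 𝔞 j x s, At 𝔞 j x s⟫ : ℝ) := fun j => by
    simp only [real_inner_self_eq_norm_sq]
  have e3 : ∀ j k, (∫ x : X3, ‖curvK β 𝔞 j k x s‖ ^ 2)
      = ∫ x : X3, (⟪curvK β 𝔞 j k x s, curvK β 𝔞 j k x s⟫ : ℝ) := fun j k => by
    simp only [real_inner_self_eq_norm_sq]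
  rw [Finset.sum_congr rfl fun j _ => e2 j,
    Finset.sum_congr rfl fun j _ => Finset.sum_congr rfl fun k _ => e3 j k]

end flow
end energy

end YMPaux

/-- Let `𝔨` be a finite-dimensional real Lie algebra with an
invariant inner product (a finite-dimensional real inner product space with an
alternating bilinear bracket `β` satisfying Jacobi, with
`⟨[z,x],y⟩ + ⟨x,[z,y]⟩ = 0`), and let `𝔞` be a smooth solution of the
Yang–Mills–Poisson equation with `𝔞(x,s) = 0` for `|x| ≥ R` (all `s ≥ 0`).
Then `s ↦ ‖∂_s 𝔞(·,s)‖²_{L²} − ‖𝔟(·,s)‖²_{L²}` is constant on `[0,∞)`. -/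
theorem energy_difference_constant
    (𝔨 : Type*) [NormedAddCommGroup 𝔨] [InnerProductSpace ℝ 𝔨]
    [FiniteDimensional ℝ 𝔨]
    (β : 𝔨 →ₗ[ℝ] 𝔨 →ₗ[ℝ] 𝔨)
    (halt : ∀ x : 𝔨, β x x = 0)
    (hjac : ∀ x y z : 𝔨, β x (β y z) + β y (β z x) + β z (β x y) = 0)
    (hinv : ∀ x y z : 𝔨, (inner ℝ (β z x) y : ℝ) + (inner ℝ x (β z y) : ℝ) = 0)
    (𝔞 : Fin 3 → (Fin 3 → ℝ) → ℝ → 𝔨)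
    (h𝔞 : ∀ j, ContDiff ℝ (⊤ : ℕ∞) fun p : (Fin 3 → ℝ) × ℝ => 𝔞 j p.1 p.2)
    (hYMP : YangMillsPoissonK β 𝔞)
    (R : ℝ) (hR : 0 < R)
    (hsupp : ∀ j (x : Fin 3 → ℝ) (s : ℝ), 0 ≤ s →
      R ≤ Real.sqrt (∑ i, x i ^ 2) → 𝔞 j x s = 0) :
    ∀ s₁ s₂ : ℝ, 0 ≤ s₁ → 0 ≤ s₂ →
      ((∑ j, ∫ x : Fin 3 → ℝ, ‖deriv (fun σ => 𝔞 j x σ) s₁‖ ^ 2)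
        - (1 / 2) * ∑ j, ∑ k, ∫ x : Fin 3 → ℝ, ‖curvK β 𝔞 j k x s₁‖ ^ 2)
      = ((∑ j, ∫ x : Fin 3 → ℝ, ‖deriv (fun σ => 𝔞 j x σ) s₂‖ ^ 2)
        - (1 / 2) * ∑ j, ∑ k, ∫ x : Fin 3 → ℝ, ‖curvK β 𝔞 j k x s₂‖ ^ 2) := by
  intro s₁ s₂ h₁ h₂
  have hz : ∀ j (x : Fin 3 → ℝ) (s : ℝ), 0 ≤ s → R ≤ ‖x‖ → 𝔞 j x s = 0 := by
    intro j x s hs hx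
    refine hsupp j x s hs (le_trans hx ?_)
    refine (pi_norm_le_iff_of_nonneg (Real.sqrt_nonneg _)).2 fun i => ?_
    rw [Real.norm_eq_abs, ← Real.sqrt_sq_eq_abs]
    exact Real.sqrt_le_sqrt (Finset.single_le_sum
      (f := fun i => x i ^ 2) (fun i _ => sq_nonneg _) (Finset.mem_univ i))
  have hrepr : ∀ s : ℝ, 0 ≤ s →
      ((∑ j, ∫ x : Fin 3 → ℝ, ‖deriv (fun σ => 𝔞 j x σ) s‖ ^ 2)
        - (1 / 2) * ∑ j, ∑ k, ∫ x : Fin 3 → ℝ, ‖curvK β 𝔞 j k x s‖ ^ 2)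
      = ∫ x : Fin 3 → ℝ, YMPaux.Ee β 𝔞 x s := fun s hs =>
    YMPaux.F_repr β h𝔞 hR hz hs
  rw [hrepr s₁ h₁, hrepr s₂ h₂]
  exact YMPaux.F_const β h𝔞 hR hz halt hinv hYMP s₁ s₂ h₁ h₂
end

section
/- Let 𝔨 be a finite-dimensional real Lie algebra and let 𝔞 be a smooth solution of the Yang–Mills–Poisson equation. Then the 𝔨-valued function φ(x,s) = ∑_j ( ∂_j(∂_s 𝔞_j) + [𝔞_j, ∂_s 𝔞_j] ) satisfies ∂_s φ = 0 identically. In particular, if ∑_j ∂_j^𝔞 (∂_s 𝔞_j) vanishes at s = 0 (i.e. ∂_s 𝔞(·,0) is horizontal at 𝔞(·,0)), then ∑_j ∂_j^𝔞 (∂_s 𝔞_j) = 0 for all s ≥ 0. -/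
noncomputable def DP {E F : Type*} [NormedAddCommGroup E] [NormedSpace ℝ E]
  [NormedAddCommGroup F] [NormedSpace ℝ F] (v : E) (f : E → F) (p : E) : F := fderiv ℝ f p v

section
variable {E F : Type*} [NormedAddCommGroup E] [NormedSpace ℝ E]
  [NormedAddCommGroup F] [NormedSpace ℝ F]

theorem DP_contDiff {f : E → F} (hf : ContDiff ℝ (⊤ : ℕ∞) f) (v : E) :
    ContDiff ℝ (⊤ : ℕ∞) (DP v f) :=
  (hf.fderiv_right (by exact_mod_cast le_top)).clm_apply contDiff_const

theorem DP_neg (v : E) (f : E → F) (p : E) :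
    DP v (fun q => -(f q)) p = -(DP v f p) := by
  simp [DP, fderiv_neg]

theorem DP_add {f g : E → F} {p : E} (hf : DifferentiableAt ℝ f p)
    (hg : DifferentiableAt ℝ g p)
    (v : E) : DP v (fun q => f q + g q) p = DP v f p + DP v g p := by
  simp [DP, fderiv_fun_add hf hg]

theorem DP_sub {f g : E → F} {p : E} (hf : DifferentiableAt ℝ f p)
    (hg : DifferentiableAt ℝ g p)
    (v : E) : DP v (fun q => f q - g q) p = DP v f p - DP v g p := by
  simp [DP, fderiv_fun_sub hf hg]

theorem DP_sum {ι : Type*} (s : Finset ι) {f : ι → E → F} {p : E}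
    (hf : ∀ i ∈ s, DifferentiableAt ℝ (f i) p) (v : E) :
    DP v (fun q => ∑ i ∈ s, f i q) p = ∑ i ∈ s, DP v (f i) p := by
  simp [DP, fderiv_fun_sum hf]

variable {G : Type*} [NormedAddCommGroup G] [NormedSpace ℝ G]

theorem DP_bilin (B : F →L[ℝ] F →L[ℝ] G) {f g : E → F} {p : E}
    (hf : DifferentiableAt ℝ f p) (hg : DifferentiableAt ℝ g p) (v : E) :
    DP v (fun q => B (f q) (g q)) p = B (DP v f p) (g p) + B (f p) (DP v g p) := by
  have hc : HasFDerivAt (fun q => B (f q)) (B.comp (fderiv ℝ f p)) p :=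
    B.hasFDerivAt.comp p hf.hasFDerivAt
  have h := (hc.clm_apply hg.hasFDerivAt).fderiv
  simp only [DP, h]
  simp [add_comm]

theorem contDiff_bilin (B : F →L[ℝ] F →L[ℝ] G) {f g : E → F}
    (hf : ContDiff ℝ (⊤ : ℕ∞) f) (hg : ContDiff ℝ (⊤ : ℕ∞) g) :
    ContDiff ℝ (⊤ : ℕ∞) (fun q => B (f q) (g q)) :=
  (B.contDiff.comp hf).clm_apply hg

theorem DP_symm {f : E → F} (hf : ContDiff ℝ (⊤ : ℕ∞) f) (v w : E) (p : E) :
    DP v (DP w f) p = DP w (DP v f) p := by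
  have hd : ∀ y, HasFDerivAt f (fderiv ℝ f y) y := fun y =>
    (hf.differentiable (by simp) y).hasFDerivAt
  have hd2 : DifferentiableAt ℝ (fderiv ℝ f) p :=
    ((hf.fderiv_right (m := ((⊤:ℕ∞) : WithTop ℕ∞)) (by exact_mod_cast le_top)).differentiable
      (by simp)) p
  have hsym := second_derivative_symmetric hd hd2.hasFDerivAt
  have key : ∀ u u' : E, DP u (DP u' f) p = fderiv ℝ (fderiv ℝ f) p u u' := by
    intro u u'
    have hc : HasFDerivAt (fun q => (ContinuousLinearMap.apply ℝ F u') (fderiv ℝ f q))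
        ((ContinuousLinearMap.apply ℝ F u').comp (fderiv ℝ (fderiv ℝ f) p)) p :=
      (ContinuousLinearMap.apply ℝ F u').hasFDerivAt.comp p hd2.hasFDerivAt
    have h0 : DP u' f = fun q => (ContinuousLinearMap.apply ℝ F u') (fderiv ℝ f q) := rfl
    rw [h0, DP, hc.fderiv]; rfl
  rw [key v w, key w v, hsym]

theorem eq_zero_of_eq_neg {M : Type*} [AddCommGroup M] [Module ℝ M] {a : M}
    (h : a = -a) : a = 0 := by
  have h2 : a + a = 0 := by nth_rewrite 1 [h]; exact neg_add_cancel a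
  have h3 : (2 : ℝ) • a = 0 := by rw [two_smul]; exact h2
  rcases smul_eq_zero.mp h3 with h | h
  · norm_num at h
  · exact h

theorem eq_zero_of_add_self {M : Type*} [AddCommGroup M] [Module ℝ M] {a : M}
    (h : a + a = 0) : a = 0 := by
  have h3 : (2 : ℝ) • a = 0 := by rw [two_smul]; exact h
  rcases smul_eq_zero.mp h3 with h | h
  · norm_num at h
  · exact h

end

section Alg

variable {𝔨 : Type*} [NormedAddCommGroup 𝔨] [NormedSpace ℝ 𝔨]

/-- Key algebraic cancellation: the covariant coderivative of the
Yang–Mills–Poisson right-hand side vanishes identically. -/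
theorem ym_cancel (B : 𝔨 →L[ℝ] 𝔨 →L[ℝ] 𝔨)
    (haltB : ∀ x : 𝔨, B x x = 0)
    (hjacB : ∀ x y z : 𝔨, B x (B y z) + B y (B z x) + B z (B x y) = 0)
    (g : Fin 3 → ((Fin 3 → ℝ) × ℝ) → 𝔨)
    (hg : ∀ j, ContDiff ℝ (⊤ : ℕ∞) (g j))
    (e : Fin 3 → ((Fin 3 → ℝ) × ℝ))
    (he : ∀ j, e j = ((Pi.single j 1 : Fin 3 → ℝ), (0 : ℝ)))
    (b : Fin 3 → Fin 3 → ((Fin 3 → ℝ) × ℝ) → 𝔨)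
    (hbdef : ∀ j k, b j k = fun q => DP (e j) (g k) q - DP (e k) (g j) q + B (g j q) (g k q))
    (R : Fin 3 → ((Fin 3 → ℝ) × ℝ) → 𝔨)
    (hRdef : ∀ j, R j = fun q => -∑ k, (DP (e k) (b k j) q + B (g k q) (b k j q)))
    (p : (Fin 3 → ℝ) × ℝ) :
    ∑ j, (DP (e j) (R j) p + B (g j p) (R j p)) = 0 := by
  -- bracket algebra
  have Bskew : ∀ x y : 𝔨, B x y = -B y x := by
    intro x y
    have h := haltB (x + y)
    simp only [map_add, ContinuousLinearMap.add_apply, haltB] at h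
    linear_combination (norm := abel) h
  have Bleib : ∀ x y z : 𝔨, B x (B y z) = B (B x y) z + B y (B x z) := by
    intro x y z
    have h := hjacB x y z
    have h1 : B y (B z x) = -B y (B x z) := by rw [Bskew z x, map_neg]
    have h2 : B z (B x y) = -B (B x y) z := Bskew z (B x y)
    rw [h1, h2] at h
    linear_combination (norm := abel) h
  -- smoothness
  have hb : ∀ j k, ContDiff ℝ (⊤ : ℕ∞) (b j k) := by
    intro j k
    rw [hbdef]
    exact ((DP_contDiff (hg k) (e j)).sub (DP_contDiff (hg j) (e k))).add
      (contDiff_bilin B (hg j) (hg k))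
  have hbd : ∀ j k q, DifferentiableAt ℝ (b j k) q := fun j k q =>
    ((hb j k).differentiable (by simp)) q
  have hgd : ∀ j q, DifferentiableAt ℝ (g j) q := fun j q =>
    ((hg j).differentiable (by simp)) q
  have ht : ∀ j k, ContDiff ℝ (⊤ : ℕ∞)
      (fun q => DP (e k) (b k j) q + B (g k q) (b k j q)) := fun j k =>
    (DP_contDiff (hb k j) (e k)).add (contDiff_bilin B (hg k) (hb k j))
  have htd : ∀ j k q, DifferentiableAt ℝ
      (fun q => DP (e k) (b k j) q + B (g k q) (b k j q)) q := fun j k q =>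
    ((ht j k).differentiable (by simp)) q
  -- function-level antisymmetry of b
  have hbskew : ∀ j k, b j k = fun q => -(b k j q) := by
    intro j k
    rw [hbdef, hbdef]
    funext q
    rw [Bskew (g j q) (g k q)]
    beta_reduce
    abel
  -- expand the goal
  have expand : ∀ j, DP (e j) (R j) p + B (g j p) (R j p) =
      -∑ k, (DP (e j) (DP (e k) (b k j)) p
        + (B (DP (e j) (g k) p) (b k j p) + B (g k p) (DP (e j) (b k j) p))
        + (B (g j p) (DP (e k) (b k j) p) + B (g j p) (B (g k p) (b k j p)))) := by
    intro j
    have h1 : DP (e j) (R j) p = -∑ k, (DP (e j) (DP (e k) (b k j)) p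
        + (B (DP (e j) (g k) p) (b k j p) + B (g k p) (DP (e j) (b k j) p))) := by
      rw [hRdef]
      have := DP_neg (e j) (fun q => ∑ k, (DP (e k) (b k j) q + B (g k q) (b k j q))) p
      rw [this, DP_sum Finset.univ (fun k _ => htd j k p) (e j)]
      congr 1
      refine Finset.sum_congr rfl fun k _ => ?_
      rw [DP_add (((DP_contDiff (hb k j) (e k)).differentiable (by simp)) p)
        (((contDiff_bilin B (hg k) (hb k j)).differentiable (by simp)) p) (e j),
        DP_bilin B (hgd k p) (hbd k j p) (e j)]
    have h2 : B (g j p) (R j p) = -∑ k, (B (g j p) (DP (e k) (b k j) p)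
        + B (g j p) (B (g k p) (b k j p))) := by
      rw [hRdef]
      simp [map_sum, map_add]
    rw [h1, h2]
    rw [← neg_add, ← Finset.sum_add_distrib]
  rw [Finset.sum_congr rfl fun j _ => expand j]
  rw [Finset.sum_neg_distrib, neg_eq_zero]
  -- now pure double-sum algebra
  have hw : ∀ j k, b j k p = -(b k j p) := by
    intro j k; rw [hbskew j k]
  -- S1 : double derivative sum vanishes
  have hS1 : ∑ j, ∑ k, DP (e j) (DP (e k) (b k j)) p = 0 := by
    apply eq_zero_of_eq_neg
    calc ∑ j, ∑ k, DP (e j) (DP (e k) (b k j)) p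
        = ∑ j, ∑ k, DP (e k) (DP (e j) (b j k)) p := Finset.sum_comm
      _ = -∑ j, ∑ k, DP (e j) (DP (e k) (b k j)) p := by
          rw [← Finset.sum_neg_distrib]
          refine Finset.sum_congr rfl fun j _ => ?_
          rw [← Finset.sum_neg_distrib]
          refine Finset.sum_congr rfl fun k _ => ?_
          rw [hbskew j k]
          have h1 : DP (e j) (fun q => -(b k j q)) = fun q => -(DP (e j) (b k j) q) :=
            funext fun q => DP_neg _ _ _
          rw [h1]
          rw [show DP (e k) (fun q => -(DP (e j) (b k j) q)) p
              = -(DP (e k) (DP (e j) (b k j)) p) from DP_neg _ _ _]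
          rw [DP_symm (hb k j) (e k) (e j) p]
  -- S34 : mixed first-derivative terms cancel pairwise
  have hS34 : ∑ j, ∑ k, (B (g k p) (DP (e j) (b k j) p)
      + B (g j p) (DP (e k) (b k j) p)) = 0 := by
    have hfirst : ∑ j, ∑ k, B (g k p) (DP (e j) (b k j) p)
        = -∑ j, ∑ k, B (g j p) (DP (e k) (b k j) p) := by
      calc ∑ j, ∑ k, B (g k p) (DP (e j) (b k j) p)
          = ∑ j, ∑ k, B (g j p) (DP (e k) (b j k) p) := Finset.sum_comm
        _ = -∑ j, ∑ k, B (g j p) (DP (e k) (b k j) p) := by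
            rw [← Finset.sum_neg_distrib]
            refine Finset.sum_congr rfl fun j _ => ?_
            rw [← Finset.sum_neg_distrib]
            refine Finset.sum_congr rfl fun k _ => ?_
            rw [hbskew j k]
            rw [show DP (e k) (fun q => -(b k j q)) p
                = -(DP (e k) (b k j) p) from DP_neg _ _ _, map_neg]
    calc ∑ j, ∑ k, (B (g k p) (DP (e j) (b k j) p) + B (g j p) (DP (e k) (b k j) p))
        = (∑ j, ∑ k, B (g k p) (DP (e j) (b k j) p))
          + ∑ j, ∑ k, B (g j p) (DP (e k) (b k j) p) := by
          simp [Finset.sum_add_distrib]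
      _ = 0 := by rw [hfirst, neg_add_cancel]
  -- S25 : curvature-bracket terms cancel
  have hS25 : ∑ j, ∑ k, (B (DP (e j) (g k) p) (b k j p)
      + B (g j p) (B (g k p) (b k j p))) = 0 := by
    set T2 := ∑ j, ∑ k, B (DP (e j) (g k) p) (b k j p) with hT2def
    set T5 := ∑ j, ∑ k, B (g j p) (B (g k p) (b k j p)) with hT5def
    set C := ∑ j, ∑ k, B (B (g j p) (g k p)) (b k j p) with hCdef
    have hswap : T2 = -∑ j, ∑ k, B (DP (e k) (g j) p) (b k j p) := by
      calc T2 = ∑ j, ∑ k, B (DP (e k) (g j) p) (b j k p) := Finset.sum_comm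
        _ = -∑ j, ∑ k, B (DP (e k) (g j) p) (b k j p) := by
            rw [← Finset.sum_neg_distrib]
            refine Finset.sum_congr rfl fun j _ => ?_
            rw [← Finset.sum_neg_distrib]
            refine Finset.sum_congr rfl fun k _ => ?_
            rw [hw j k, map_neg]
    have h2a : T2 + T2 = -C := by
      calc T2 + T2
          = T2 + -∑ j, ∑ k, B (DP (e k) (g j) p) (b k j p) := by
            nth_rewrite 2 [hswap]; rfl
        _ = ∑ j, ∑ k, (B (DP (e j) (g k) p) (b k j p)
            - B (DP (e k) (g j) p) (b k j p)) := by
            rw [← sub_eq_add_neg, hT2def, ← Finset.sum_sub_distrib]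
            exact Finset.sum_congr rfl fun j _ => by rw [← Finset.sum_sub_distrib]
        _ = ∑ j, ∑ k, -(B (B (g j p) (g k p)) (b k j p)) := by
            refine Finset.sum_congr rfl fun j _ => Finset.sum_congr rfl fun k _ => ?_
            rw [← ContinuousLinearMap.sub_apply, ← map_sub]
            have hd : DP (e j) (g k) p - DP (e k) (g j) p
                = b j k p - B (g j p) (g k p) := by
              rw [hbdef j k]
              show _ = (DP (e j) (g k) p - DP (e k) (g j) p + B (g j p) (g k p))
                - B (g j p) (g k p)
              abel
            rw [hd, map_sub, ContinuousLinearMap.sub_apply]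
            have h0 : B (b j k p) (b k j p) = 0 := by
              rw [hw j k, map_neg, ContinuousLinearMap.neg_apply, haltB, neg_zero]
            rw [h0, zero_sub]
        _ = -C := by
            rw [hCdef]
            simp [Finset.sum_neg_distrib]
    have hswap5 : ∑ j, ∑ k, B (g k p) (B (g j p) (b k j p)) = -T5 := by
      calc ∑ j, ∑ k, B (g k p) (B (g j p) (b k j p))
          = ∑ j, ∑ k, B (g j p) (B (g k p) (b j k p)) := Finset.sum_comm
        _ = -T5 := by
            rw [hT5def, ← Finset.sum_neg_distrib]
            refine Finset.sum_congr rfl fun j _ => ?_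
            rw [← Finset.sum_neg_distrib]
            refine Finset.sum_congr rfl fun k _ => ?_
            rw [hw j k, map_neg, map_neg]
    have h5 : T5 + T5 = C := by
      have hx : T5 = C + -T5 := by
        rw [← hswap5, hT5def, hCdef, ← Finset.sum_add_distrib]
        refine Finset.sum_congr rfl fun j _ => ?_
        rw [← Finset.sum_add_distrib]
        exact Finset.sum_congr rfl fun k _ => Bleib _ _ _
      calc T5 + T5 = (C + -T5) + T5 := by nth_rewrite 1 [hx]; rfl
        _ = C := by abel
    have hsum : (T2 + T5) + (T2 + T5) = 0 := by
      have hre : (T2 + T5) + (T2 + T5) = (T2 + T2) + (T5 + T5) := by abel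
      rw [hre, h2a, h5, neg_add_cancel]
    calc ∑ j, ∑ k, (B (DP (e j) (g k) p) (b k j p) + B (g j p) (B (g k p) (b k j p)))
        = T2 + T5 := by
          rw [hT2def, hT5def, ← Finset.sum_add_distrib]
          exact Finset.sum_congr rfl fun j _ => by rw [← Finset.sum_add_distrib]
      _ = 0 := eq_zero_of_add_self hsum
  -- combine the three groups
  calc ∑ j, ∑ k, (DP (e j) (DP (e k) (b k j)) p
        + (B (DP (e j) (g k) p) (b k j p) + B (g k p) (DP (e j) (b k j) p))
        + (B (g j p) (DP (e k) (b k j) p) + B (g j p) (B (g k p) (b k j p))))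
      = (∑ j, ∑ k, DP (e j) (DP (e k) (b k j)) p)
        + (∑ j, ∑ k, (B (g k p) (DP (e j) (b k j) p) + B (g j p) (DP (e k) (b k j) p)))
        + (∑ j, ∑ k, (B (DP (e j) (g k) p) (b k j p)
            + B (g j p) (B (g k p) (b k j p)))) := by
        simp only [← Finset.sum_add_distrib]
        exact Finset.sum_congr rfl fun j _ => Finset.sum_congr rfl fun k _ => by abel
    _ = 0 := by rw [hS1, hS34, hS25]; simp

end Alg

section Slice

variable {F : Type*} [NormedAddCommGroup F] [NormedSpace ℝ F]

theorem deriv_slice {f : (Fin 3 → ℝ) × ℝ → F} {x : Fin 3 → ℝ} {s : ℝ}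
    (hf : DifferentiableAt ℝ f (x, s)) :
    deriv (fun σ => f (x, σ)) s = DP ((0 : Fin 3 → ℝ), (1 : ℝ)) f (x, s) := by
  have h1 : HasDerivAt (fun σ : ℝ => ((x : Fin 3 → ℝ), σ)) ((0 : Fin 3 → ℝ), (1 : ℝ)) s :=
    (hasDerivAt_const s x).prodMk (hasDerivAt_id s)
  exact (hf.hasFDerivAt.comp_hasDerivAt s h1).deriv

theorem pd3_slice {f : (Fin 3 → ℝ) × ℝ → F} {x : Fin 3 → ℝ} {s : ℝ} (j : Fin 3)
    (hf : DifferentiableAt ℝ f (x, s)) :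
    pd3 j (fun y => f (y, s)) x = DP ((Pi.single j 1 : Fin 3 → ℝ), (0 : ℝ)) f (x, s) := by
  have h1 : HasFDerivAt (fun y : Fin 3 → ℝ => (y, s))
      (ContinuousLinearMap.inl ℝ (Fin 3 → ℝ) ℝ) x := hasFDerivAt_prodMk_left x s
  have h3 := (hf.hasFDerivAt.comp x h1).fderiv
  rw [pd3, show (fun y => f (y, s)) = f ∘ (fun y => (y, s)) from rfl, h3]
  simp [DP]

end Slice


section Main

variable {𝔨 : Type*} [NormedAddCommGroup 𝔨] [NormedSpace ℝ 𝔨]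

/-- The bracket as a continuous bilinear map (finite dimensions). -/
noncomputable def ymB [FiniteDimensional ℝ 𝔨] (β : 𝔨 →ₗ[ℝ] 𝔨 →ₗ[ℝ] 𝔨) :
    𝔨 →L[ℝ] 𝔨 →L[ℝ] 𝔨 :=
  LinearMap.toContinuousLinearMap
    { toFun := fun x => LinearMap.toContinuousLinearMap (β x)
      map_add' := fun x y => by ext z; simp
      map_smul' := fun c x => by ext z; simp }

theorem ymB_apply [FiniteDimensional ℝ 𝔨] (β : 𝔨 →ₗ[ℝ] 𝔨 →ₗ[ℝ] 𝔨) (x y : 𝔨) :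
    ymB β x y = β x y := rfl

/-- Basis direction in space. -/
def ymE (j : Fin 3) : (Fin 3 → ℝ) × ℝ := (Pi.single j 1, 0)

/-- Direction of the `s`-axis. -/
def ymE4 : (Fin 3 → ℝ) × ℝ := (0, 1)

/-- The gauge potential as a function of the joint variable. -/
def ymG (𝔞 : Fin 3 → (Fin 3 → ℝ) → ℝ → 𝔨) (j : Fin 3) :
    ((Fin 3 → ℝ) × ℝ) → 𝔨 := fun p => 𝔞 j p.1 p.2

/-- Curvature as a function of the joint variable. -/
noncomputable def ymb [FiniteDimensional ℝ 𝔨] (β : 𝔨 →ₗ[ℝ] 𝔨 →ₗ[ℝ] 𝔨)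
    (𝔞 : Fin 3 → (Fin 3 → ℝ) → ℝ → 𝔨) (j k : Fin 3) : ((Fin 3 → ℝ) × ℝ) → 𝔨 :=
  fun q => DP (ymE j) (ymG 𝔞 k) q - DP (ymE k) (ymG 𝔞 j) q
    + ymB β (ymG 𝔞 j q) (ymG 𝔞 k q)

/-- Right-hand side of the Yang–Mills–Poisson equation. -/
noncomputable def ymR [FiniteDimensional ℝ 𝔨] (β : 𝔨 →ₗ[ℝ] 𝔨 →ₗ[ℝ] 𝔨)
    (𝔞 : Fin 3 → (Fin 3 → ℝ) → ℝ → 𝔨) (j : Fin 3) : ((Fin 3 → ℝ) × ℝ) → 𝔨 :=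
  fun q => -∑ k, (DP (ymE k) (ymb β 𝔞 k j) q + ymB β (ymG 𝔞 k q) (ymb β 𝔞 k j q))

/-- The covariant coderivative of `∂_s 𝔞` as a function of the joint variable. -/
noncomputable def ymPhi [FiniteDimensional ℝ 𝔨] (β : 𝔨 →ₗ[ℝ] 𝔨 →ₗ[ℝ] 𝔨)
    (𝔞 : Fin 3 → (Fin 3 → ℝ) → ℝ → 𝔨) : ((Fin 3 → ℝ) × ℝ) → 𝔨 :=
  fun q => ∑ j, (DP (ymE j) (DP ymE4 (ymG 𝔞 j)) q
    + ymB β (ymG 𝔞 j q) (DP ymE4 (ymG 𝔞 j) q))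

end Main

/-- For a smooth solution `𝔞` of the Yang–Mills–Poisson equation
(`𝔨` a finite-dimensional real Lie algebra), the function
`φ(x,s) = ∑_j (∂_j(∂_s 𝔞_j) + [𝔞_j, ∂_s 𝔞_j]) = ∑_j ∂_j^𝔞(∂_s 𝔞_j)` satisfies
`∂_s φ = 0` identically; in particular if `φ(·,0) = 0` (`∂_s 𝔞(·,0)` is
horizontal at `𝔞(·,0)`) then `φ(·,s) = 0` for all `s ≥ 0`. -/
theorem horizontality_is_preserved
    (𝔨 : Type*) [NormedAddCommGroup 𝔨] [NormedSpace ℝ 𝔨] [FiniteDimensional ℝ 𝔨]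
    (β : 𝔨 →ₗ[ℝ] 𝔨 →ₗ[ℝ] 𝔨)
    (halt : ∀ x : 𝔨, β x x = 0)
    (hjac : ∀ x y z : 𝔨, β x (β y z) + β y (β z x) + β z (β x y) = 0)
    (𝔞 : Fin 3 → (Fin 3 → ℝ) → ℝ → 𝔨)
    (h𝔞 : ∀ j, ContDiff ℝ (⊤ : ℕ∞) fun p : (Fin 3 → ℝ) × ℝ => 𝔞 j p.1 p.2)
    (hYMP : YangMillsPoissonK β 𝔞)
    (φ : (Fin 3 → ℝ) → ℝ → 𝔨)
    (hφ : ∀ x s, φ x s =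
      ∑ j, (pd3 j (fun y => deriv (fun σ => 𝔞 j y σ) s) x
        + β (𝔞 j x s) (deriv (fun σ => 𝔞 j x σ) s))) :
    (∀ x (s : ℝ), 0 ≤ s → deriv (fun σ => φ x σ) s = 0) ∧
    ((∀ x, φ x 0 = 0) → ∀ x (s : ℝ), 0 ≤ s → φ x s = 0) := by
  classical
  have hg : ∀ j, ContDiff ℝ (⊤ : ℕ∞) (ymG 𝔞 j) := fun j => h𝔞 j
  have hgd : ∀ j q, DifferentiableAt ℝ (ymG 𝔞 j) q := fun j q =>
    ((hg j).differentiable (by simp)) q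
  have haltB : ∀ x : 𝔨, ymB β x x = 0 := fun x => by rw [ymB_apply]; exact halt x
  have hjacB : ∀ x y z : 𝔨,
      ymB β x (ymB β y z) + ymB β y (ymB β z x) + ymB β z (ymB β x y) = 0 := fun x y z => by
    simp only [ymB_apply]; exact hjac x y z
  have hbsm : ∀ j k, ContDiff ℝ (⊤ : ℕ∞) (ymb β 𝔞 j k) := fun j k =>
    ((DP_contDiff (hg k) (ymE j)).sub (DP_contDiff (hg j) (ymE k))).add
      (contDiff_bilin (ymB β) (hg j) (hg k))
  have hbd : ∀ j k q, DifferentiableAt ℝ (ymb β 𝔞 j k) q := fun j k q =>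
    ((hbsm j k).differentiable (by simp)) q
  have hRsm : ∀ j, ContDiff ℝ (⊤ : ℕ∞) (ymR β 𝔞 j) := fun j =>
    (ContDiff.sum fun k _ => (DP_contDiff (hbsm k j) (ymE k)).add
      (contDiff_bilin (ymB β) (hg k) (hbsm k j))).neg
  have hRd : ∀ j q, DifferentiableAt ℝ (ymR β 𝔞 j) q := fun j q =>
    ((hRsm j).differentiable (by simp)) q
  have hsdd : ∀ j, ContDiff ℝ (⊤ : ℕ∞) (DP ymE4 (DP ymE4 (ymG 𝔞 j))) := fun j =>
    DP_contDiff (DP_contDiff (hg j) ymE4) ymE4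
  -- curvature translation
  have hcurv : ∀ (j k : Fin 3) (y : Fin 3 → ℝ) (s : ℝ),
      curvK β 𝔞 j k y s = ymb β 𝔞 j k (y, s) := by
    intro j k y s
    have h1 : pd3 j (fun y' => 𝔞 k y' s) y = DP (ymE j) (ymG 𝔞 k) (y, s) :=
      pd3_slice j (hgd k (y, s))
    have h2 : pd3 k (fun y' => 𝔞 j y' s) y = DP (ymE k) (ymG 𝔞 j) (y, s) :=
      pd3_slice k (hgd j (y, s))
    rw [curvK, h1, h2]
    show _ = DP (ymE j) (ymG 𝔞 k) (y, s) - DP (ymE k) (ymG 𝔞 j) (y, s)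
      + ymB β (ymG 𝔞 j (y, s)) (ymG 𝔞 k (y, s))
    rw [ymB_apply]
    rfl
  -- φ in joint-variable form
  have hφΦ : ∀ (y : Fin 3 → ℝ) (σ : ℝ), φ y σ = ymPhi β 𝔞 (y, σ) := by
    intro y σ
    rw [hφ]
    show _ = ∑ j, (DP (ymE j) (DP ymE4 (ymG 𝔞 j)) (y, σ)
      + ymB β (ymG 𝔞 j (y, σ)) (DP ymE4 (ymG 𝔞 j) (y, σ)))
    refine Finset.sum_congr rfl fun j _ => ?_
    have h1 : pd3 j (fun y' => deriv (fun σ' => 𝔞 j y' σ') σ) y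
        = DP (ymE j) (DP ymE4 (ymG 𝔞 j)) (y, σ) := by
      have hder : (fun y' => deriv (fun σ' => 𝔞 j y' σ') σ)
          = fun y' => DP ymE4 (ymG 𝔞 j) (y', σ) :=
        funext fun y' => deriv_slice (hgd j (y', σ))
      rw [hder]
      exact pd3_slice j
        (((DP_contDiff (hg j) ymE4).differentiable (by simp)) (y, σ))
    have h2 : deriv (fun σ' => 𝔞 j y σ') σ = DP ymE4 (ymG 𝔞 j) (y, σ) :=
      deriv_slice (hgd j (y, σ))
    rw [h1, h2, ymB_apply]
    rfl
  have hΦsm : ContDiff ℝ (⊤ : ℕ∞) (ymPhi β 𝔞) :=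
    ContDiff.sum fun j _ => (DP_contDiff (DP_contDiff (hg j) ymE4) (ymE j)).add
      (contDiff_bilin (ymB β) (hg j) (DP_contDiff (hg j) ymE4))
  -- Part 1
  have key : ∀ x (s : ℝ), 0 ≤ s → deriv (fun σ => φ x σ) s = 0 := by
    intro x s hs
    have hfun : (fun σ => φ x σ) = fun σ => ymPhi β 𝔞 (x, σ) := funext fun σ => hφΦ x σ
    rw [hfun, deriv_slice ((hΦsm.differentiable (by simp)) (x, s)),
      show ((0 : Fin 3 → ℝ), (1 : ℝ)) = ymE4 from rfl]
    -- translate the YMP equation at time s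
    have hymp : ∀ j (y : Fin 3 → ℝ),
        DP ymE4 (DP ymE4 (ymG 𝔞 j)) (y, s) = ymR β 𝔞 j (y, s) := by
      intro j y
      have h := hYMP j y s hs
      have hin : (fun τ => deriv (fun σ' => 𝔞 j y σ') τ)
          = fun τ => DP ymE4 (ymG 𝔞 j) (y, τ) :=
        funext fun τ => deriv_slice (hgd j (y, τ))
      rw [hin, deriv_slice
        (((DP_contDiff (hg j) ymE4).differentiable (by simp)) (y, s))] at h
      rw [show ((0 : Fin 3 → ℝ), (1 : ℝ)) = ymE4 from rfl] at h
      rw [h]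
      show _ = -∑ k, (DP (ymE k) (ymb β 𝔞 k j) (y, s)
        + ymB β (ymG 𝔞 k (y, s)) (ymb β 𝔞 k j (y, s)))
      congr 1
      refine Finset.sum_congr rfl fun k _ => ?_
      have hc1 : pd3 k (fun y' => curvK β 𝔞 k j y' s) y
          = DP (ymE k) (ymb β 𝔞 k j) (y, s) := by
        have hcf : (fun y' => curvK β 𝔞 k j y' s) = fun y' => ymb β 𝔞 k j (y', s) :=
          funext fun y' => hcurv k j y' s
        rw [hcf]
        exact pd3_slice k (hbd k j (y, s))
      rw [hc1, hcurv k j y s, ymB_apply]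
      rfl
    have hsumrw : DP ymE4 (ymPhi β 𝔞) (x, s)
        = ∑ j, DP ymE4 (fun q => DP (ymE j) (DP ymE4 (ymG 𝔞 j)) q
            + ymB β (ymG 𝔞 j q) (DP ymE4 (ymG 𝔞 j) q)) (x, s) :=
      DP_sum Finset.univ (fun j _ =>
        (((DP_contDiff (DP_contDiff (hg j) ymE4) (ymE j)).add
          (contDiff_bilin (ymB β) (hg j) (DP_contDiff (hg j) ymE4))).differentiable
            (by simp)) (x, s)) ymE4
    rw [hsumrw]
    have hterm : ∀ j, DP ymE4 (fun q => DP (ymE j) (DP ymE4 (ymG 𝔞 j)) q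
        + ymB β (ymG 𝔞 j q) (DP ymE4 (ymG 𝔞 j) q)) (x, s)
        = DP (ymE j) (ymR β 𝔞 j) (x, s) + ymB β (ymG 𝔞 j (x, s)) (ymR β 𝔞 j (x, s)) := by
      intro j
      rw [DP_add (((DP_contDiff (DP_contDiff (hg j) ymE4) (ymE j)).differentiable
            (by simp)) (x, s))
          (((contDiff_bilin (ymB β) (hg j) (DP_contDiff (hg j) ymE4)).differentiable
            (by simp)) (x, s)) ymE4,
        DP_bilin (ymB β) (hgd j (x, s))
          (((DP_contDiff (hg j) ymE4).differentiable (by simp)) (x, s)) ymE4,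
        haltB, zero_add,
        DP_symm (DP_contDiff (hg j) ymE4) ymE4 (ymE j) (x, s)]
      have hA : DP (ymE j) (DP ymE4 (DP ymE4 (ymG 𝔞 j))) (x, s)
          = DP (ymE j) (ymR β 𝔞 j) (x, s) := by
        calc DP (ymE j) (DP ymE4 (DP ymE4 (ymG 𝔞 j))) (x, s)
            = pd3 j (fun y => DP ymE4 (DP ymE4 (ymG 𝔞 j)) (y, s)) x :=
              (pd3_slice j (((hsdd j).differentiable (by simp)) (x, s))).symm
          _ = pd3 j (fun y => ymR β 𝔞 j (y, s)) x := by
              rw [show (fun y => DP ymE4 (DP ymE4 (ymG 𝔞 j)) (y, s))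
                = fun y => ymR β 𝔞 j (y, s) from funext fun y => hymp j y]
          _ = DP (ymE j) (ymR β 𝔞 j) (x, s) := pd3_slice j (hRd j (x, s))
      rw [hA, hymp j x]
    rw [Finset.sum_congr rfl fun j _ => hterm j]
    exact ym_cancel (ymB β) haltB hjacB (ymG 𝔞) hg ymE (fun j => rfl)
      (ymb β 𝔞) (fun j k => rfl) (ymR β 𝔞) (fun j => rfl) (x, s)
  refine ⟨key, ?_⟩
  -- Part 2
  intro h0 x s hs
  have hfun : (fun σ => φ x σ) = fun σ => ymPhi β 𝔞 (x, σ) := funext fun σ => hφΦ x σ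
  have hdiff : Differentiable ℝ (fun σ => φ x σ) := by
    rw [hfun]
    exact (hΦsm.differentiable (by simp)).comp
      ((differentiable_const x).prodMk differentiable_id)
  have hcont : ContinuousOn (fun σ => φ x σ) (Set.Icc 0 s) :=
    hdiff.continuous.continuousOn
  have hderiv : ∀ y ∈ Set.Ico (0 : ℝ) s,
      HasDerivWithinAt (fun σ => φ x σ) 0 (Set.Ici y) y := by
    intro y hy
    have hd : HasDerivAt (fun σ => φ x σ) (deriv (fun σ => φ x σ) y) y :=
      (hdiff y).hasDerivAt
    rw [key x y hy.1] at hd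
    exact hd.hasDerivWithinAt
  have := constant_of_has_deriv_right_zero hcont hderiv s ⟨hs, le_rfl⟩
  rw [this, h0 x]
end
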